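/- arXiv:2311.04200 — 5 statements merged into one kernel-verified Lean document; each statement's English description precedes it below -/
import Mathlib

section
/- Let F(v1,v2,v3) = (1/2)·v1²·v3 + (1/2)·v1·v2² − v2⁴/24 + v2·e^{v3}, defined on ℝ³, and let η be the 3×3 matrix with entries η_{αβ} = δ_{α+β,4} for α=1,3 and η_{22}=1 (i.e. η = [[0,0,1],[0,1,0],[1,0,0]]), so that η⁻¹ = η. Then F satisfies the WDVV associativity equations: for all α,β,γ,δ ∈ {1,2,3}, ∑_{ρ,σ} F_{αβρ} η^{ρσ} F_{σγδ} = ∑_{ρ,σ} F_{δβρ} η^{ρσ} F_{σγα}, where F_{αβγ} denotes the third partial derivative ∂³F/∂v^α∂v^β∂v^γ. -/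
noncomputable def pd (i : Fin 3) (f : (Fin 3 → ℝ) → ℝ) (x : Fin 3 → ℝ) : ℝ :=
  deriv (fun t => f (Function.update x i t)) (x i)

noncomputable def Fc : (Fin 3 → ℝ) → ℝ := fun v =>
  (1/2) * (v 0)^2 * (v 2) + (1/2) * (v 0) * (v 1)^2 - (v 1)^4 / 24
    + (v 1) * Real.exp (v 2)

lemma f10 : ((1:Fin 3) = 0) = False := by simp
lemma f20 : ((2:Fin 3) = 0) = False := by simp
lemma f01 : ((0:Fin 3) = 1) = False := by simp
lemma f21 : ((2:Fin 3) = 1) = False := by simp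
lemma f02 : ((0:Fin 3) = 2) = False := by simp
lemma f12 : ((1:Fin 3) = 2) = False := by simp

lemma pd0F : pd 0 Fc = fun x => x 0 * x 2 + 1/2 * x 1 ^ 2 := by
  funext x
  simp only [pd, Fc, Function.update_apply, Fin.isValue, f10, f20, f01, f21, f02, f12,
    if_false, if_true, eq_self_iff_true]
  have h := (((((hasDerivAt_pow 2 (x 0)).const_mul ((1:ℝ)/2)).mul_const (x 2)).add
      (((hasDerivAt_id' (x 0)).const_mul ((1:ℝ)/2)).mul_const ((x 1)^2))).sub_const
      ((x 1)^4/24)).add_const (x 1 * Real.exp (x 2))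
  exact h.deriv.trans (by push_cast; ring)

lemma pd1F : pd 1 Fc = fun x => x 0 * x 1 - x 1 ^ 3 / 6 + Real.exp (x 2) := by
  funext x
  simp only [pd, Fc, Function.update_apply, Fin.isValue, f10, f20, f01, f21, f02, f12,
    if_false, if_true, eq_self_iff_true]
  have h := (((((hasDerivAt_pow 2 (x 1)).const_mul (1/2 * x 0)).const_add
      (1/2 * x 0 ^ 2 * x 2)).sub ((hasDerivAt_pow 4 (x 1)).div_const 24)).add
      ((hasDerivAt_id' (x 1)).mul_const (Real.exp (x 2))))
  exact h.deriv.trans (by push_cast; ring)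

lemma pd2F : pd 2 Fc = fun x => 1/2 * x 0 ^ 2 + x 1 * Real.exp (x 2) := by
  funext x
  simp only [pd, Fc, Function.update_apply, Fin.isValue, f10, f20, f01, f21, f02, f12,
    if_false, if_true, eq_self_iff_true]
  have h := ((((hasDerivAt_id' (x 2)).const_mul (1/2 * x 0 ^ 2)).add_const
      (1/2 * x 0 * x 1 ^ 2)).sub_const (x 1 ^ 4 / 24)).add
      ((Real.hasDerivAt_exp (x 2)).const_mul (x 1))
  exact h.deriv.trans (by push_cast; ring)

-- second level
lemma pd00 : pd 0 (pd 0 Fc) = fun x => x 2 := by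
  rw [pd0F]; funext x
  simp only [pd, Function.update_apply, Fin.isValue, f10, f20, f01, f21, f02, f12,
    if_false, if_true, eq_self_iff_true]
  have h := ((hasDerivAt_id' (x 0)).mul_const (x 2)).add_const (1/2 * x 1 ^ 2)
  rw [h.deriv]; ring

lemma pd10 : pd 1 (pd 0 Fc) = fun x => x 1 := by
  rw [pd0F]; funext x
  simp only [pd, Function.update_apply, Fin.isValue, f10, f20, f01, f21, f02, f12,
    if_false, if_true, eq_self_iff_true]
  have h := ((hasDerivAt_pow 2 (x 1)).const_mul ((1:ℝ)/2)).const_add (x 0 * x 2)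
  rw [h.deriv]; push_cast; ring

lemma pd20 : pd 2 (pd 0 Fc) = fun x => x 0 := by
  rw [pd0F]; funext x
  simp only [pd, Function.update_apply, Fin.isValue, f10, f20, f01, f21, f02, f12,
    if_false, if_true, eq_self_iff_true]
  have h := ((hasDerivAt_id' (x 2)).const_mul (x 0)).add_const (1/2 * x 1 ^ 2)
  rw [h.deriv]; ring

lemma pd01 : pd 0 (pd 1 Fc) = fun x => x 1 := by
  rw [pd1F]; funext x
  simp only [pd, Function.update_apply, Fin.isValue, f10, f20, f01, f21, f02, f12,
    if_false, if_true, eq_self_iff_true]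
  have h := (((hasDerivAt_id' (x 0)).mul_const (x 1)).sub_const (x 1 ^ 3 / 6)).add_const
      (Real.exp (x 2))
  rw [h.deriv]; ring

lemma pd11 : pd 1 (pd 1 Fc) = fun x => x 0 - x 1 ^ 2 / 2 := by
  rw [pd1F]; funext x
  simp only [pd, Function.update_apply, Fin.isValue, f10, f20, f01, f21, f02, f12,
    if_false, if_true, eq_self_iff_true]
  have h := (((hasDerivAt_id' (x 1)).const_mul (x 0)).sub
      ((hasDerivAt_pow 3 (x 1)).div_const 6)).add_const (Real.exp (x 2))
  exact h.deriv.trans (by push_cast; ring)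

lemma pd21 : pd 2 (pd 1 Fc) = fun x => Real.exp (x 2) := by
  rw [pd1F]; funext x
  simp only [pd, Function.update_apply, Fin.isValue, f10, f20, f01, f21, f02, f12,
    if_false, if_true, eq_self_iff_true]
  have h := (Real.hasDerivAt_exp (x 2)).const_add (x 0 * x 1 - x 1 ^ 3 / 6)
  rw [h.deriv]

lemma pd02 : pd 0 (pd 2 Fc) = fun x => x 0 := by
  rw [pd2F]; funext x
  simp only [pd, Function.update_apply, Fin.isValue, f10, f20, f01, f21, f02, f12,
    if_false, if_true, eq_self_iff_true]
  have h := ((hasDerivAt_pow 2 (x 0)).const_mul ((1:ℝ)/2)).add_const (x 1 * Real.exp (x 2))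
  rw [h.deriv]; push_cast; ring

lemma pd12 : pd 1 (pd 2 Fc) = fun x => Real.exp (x 2) := by
  rw [pd2F]; funext x
  simp only [pd, Function.update_apply, Fin.isValue, f10, f20, f01, f21, f02, f12,
    if_false, if_true, eq_self_iff_true]
  have h := ((hasDerivAt_id' (x 1)).mul_const (Real.exp (x 2))).const_add (1/2 * x 0 ^ 2)
  rw [h.deriv]; ring

lemma pd22 : pd 2 (pd 2 Fc) = fun x => x 1 * Real.exp (x 2) := by
  rw [pd2F]; funext x
  simp only [pd, Function.update_apply, Fin.isValue, f10, f20, f01, f21, f02, f12,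
    if_false, if_true, eq_self_iff_true]
  have h := ((Real.hasDerivAt_exp (x 2)).const_mul (x 1)).const_add (1/2 * x 0 ^ 2)
  rw [h.deriv]

-- third level pointwise helpers
lemma pd_coord (i j : Fin 3) (x : Fin 3 → ℝ) :
    pd i (fun y => y j) x = if j = i then 1 else 0 := by
  rcases eq_or_ne j i with h | h
  · subst h; simp [pd, Function.update_apply]
  · simp [pd, Function.update_apply, h]

lemma pd0H11 (x : Fin 3 → ℝ) : pd 0 (fun y => y 0 - y 1 ^ 2 / 2) x = 1 := by
  simp only [pd, Function.update_apply, Fin.isValue, f10, f20, f01, f21, f02, f12,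
    if_false, if_true, eq_self_iff_true]
  have h := (hasDerivAt_id' (x 0)).sub_const (x 1 ^ 2 / 2)
  rw [h.deriv]

lemma pd1H11 (x : Fin 3 → ℝ) : pd 1 (fun y => y 0 - y 1 ^ 2 / 2) x = -(x 1) := by
  simp only [pd, Function.update_apply, Fin.isValue, f10, f20, f01, f21, f02, f12,
    if_false, if_true, eq_self_iff_true]
  have h := ((hasDerivAt_pow 2 (x 1)).div_const 2).const_sub (x 0)
  rw [h.deriv]; push_cast; ring

lemma pd2H11 (x : Fin 3 → ℝ) : pd 2 (fun y => y 0 - y 1 ^ 2 / 2) x = 0 := by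
  simp [pd, Function.update_apply]

lemma pd0E (x : Fin 3 → ℝ) : pd 0 (fun y => Real.exp (y 2)) x = 0 := by
  simp [pd, Function.update_apply]
lemma pd1E (x : Fin 3 → ℝ) : pd 1 (fun y => Real.exp (y 2)) x = 0 := by
  simp [pd, Function.update_apply]
lemma pd2E (x : Fin 3 → ℝ) : pd 2 (fun y => Real.exp (y 2)) x = Real.exp (x 2) := by
  simp only [pd, Function.update_apply, Fin.isValue, f10, f20, f01, f21, f02, f12,
    if_false, if_true, eq_self_iff_true]
  exact (Real.hasDerivAt_exp (x 2)).deriv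

lemma pd0K (x : Fin 3 → ℝ) : pd 0 (fun y => y 1 * Real.exp (y 2)) x = 0 := by
  simp [pd, Function.update_apply]
lemma pd1K (x : Fin 3 → ℝ) : pd 1 (fun y => y 1 * Real.exp (y 2)) x = Real.exp (x 2) := by
  simp only [pd, Function.update_apply, Fin.isValue, f10, f20, f01, f21, f02, f12,
    if_false, if_true, eq_self_iff_true]
  have h := (hasDerivAt_id' (x 1)).mul_const (Real.exp (x 2))
  rw [h.deriv]; ring
lemma pd2K (x : Fin 3 → ℝ) : pd 2 (fun y => y 1 * Real.exp (y 2)) x = x 1 * Real.exp (x 2) := by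
  simp only [pd, Function.update_apply, Fin.isValue, f10, f20, f01, f21, f02, f12,
    if_false, if_true, eq_self_iff_true]
  exact ((Real.hasDerivAt_exp (x 2)).const_mul (x 1)).deriv

noncomputable def TT (x : Fin 3 → ℝ) : Fin 3 → Fin 3 → Fin 3 → ℝ :=
  ![![![0,0,1], ![0,1,0], ![1,0,0]],
    ![![0,1,0], ![1,-(x 1),0], ![0,0,Real.exp (x 2)]],
    ![![1,0,0], ![0,0,Real.exp (x 2)], ![0,Real.exp (x 2), x 1 * Real.exp (x 2)]]]


lemma pd3 (a b c : Fin 3) (x : Fin 3 → ℝ) :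
    pd a (pd b (pd c Fc)) x = TT x c b a := by
  have key : ∀ j : Fin 3, ∀ v : ℝ, (if j = 0 then v else 0) = v * (if j = 0 then 1 else 0) := by
    intro j v; split <;> ring
  fin_cases b <;> fin_cases c
  · show pd a (pd 0 (pd 0 Fc)) x = TT x 0 0 a
    rw [pd00]; fin_cases a <;> simp [TT, pd_coord, Matrix.vecHead, Matrix.vecTail]
  · show pd a (pd 0 (pd 1 Fc)) x = TT x 1 0 a
    rw [pd01]; fin_cases a <;> simp [TT, pd_coord, Matrix.vecHead, Matrix.vecTail]
  · show pd a (pd 0 (pd 2 Fc)) x = TT x 2 0 a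
    rw [pd02]; fin_cases a <;> simp [TT, pd_coord, Matrix.vecHead, Matrix.vecTail]
  · show pd a (pd 1 (pd 0 Fc)) x = TT x 0 1 a
    rw [pd10]; fin_cases a <;> simp [TT, pd_coord, Matrix.vecHead, Matrix.vecTail]
  · show pd a (pd 1 (pd 1 Fc)) x = TT x 1 1 a
    rw [pd11]; fin_cases a <;> simp [TT, Matrix.vecHead, Matrix.vecTail, pd0H11, pd1H11, pd2H11]
  · show pd a (pd 1 (pd 2 Fc)) x = TT x 2 1 a
    rw [pd12]; fin_cases a <;> simp [TT, Matrix.vecHead, Matrix.vecTail, pd0E, pd1E, pd2E]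
  · show pd a (pd 2 (pd 0 Fc)) x = TT x 0 2 a
    rw [pd20]; fin_cases a <;> simp [TT, pd_coord, Matrix.vecHead, Matrix.vecTail]
  · show pd a (pd 2 (pd 1 Fc)) x = TT x 1 2 a
    rw [pd21]; fin_cases a <;> simp [TT, Matrix.vecHead, Matrix.vecTail, pd0E, pd1E, pd2E]
  · show pd a (pd 2 (pd 2 Fc)) x = TT x 2 2 a
    rw [pd22]; fin_cases a <;> simp [TT, Matrix.vecHead, Matrix.vecTail, pd0K, pd1K, pd2K]

theorem wdvv_P1_orbifold :
    let F : (Fin 3 → ℝ) → ℝ := fun v =>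
      (1/2) * (v 0)^2 * (v 2) + (1/2) * (v 0) * (v 1)^2 - (v 1)^4 / 24
        + (v 1) * Real.exp (v 2)
    let η : Fin 3 → Fin 3 → ℝ := ![![0,0,1], ![0,1,0], ![1,0,0]]
    ∀ (x : Fin 3 → ℝ) (α β γ δ : Fin 3),
      ∑ ρ : Fin 3, ∑ σ : Fin 3,
          pd α (pd β (pd ρ F)) x * η ρ σ * pd σ (pd γ (pd δ F)) x
        = ∑ ρ : Fin 3, ∑ σ : Fin 3,
          pd δ (pd β (pd ρ F)) x * η ρ σ * pd σ (pd γ (pd α F)) x := by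
  intro F η x α β γ δ
  have hF : F = Fc := rfl
  have hη : η = ![![0,0,1], ![0,1,0], ![1,0,0]] := rfl
  simp only [hF, hη, Fin.sum_univ_three, pd3, Matrix.cons_val_zero, Matrix.cons_val_one,
    Matrix.head_cons, Matrix.cons_val_two, Matrix.tail_cons, Matrix.head_fin_const]
  fin_cases α <;> fin_cases β <;> fin_cases γ <;> fin_cases δ <;>
    simp [TT, Matrix.vecHead, Matrix.vecTail] <;> ring_nf
end

section
/- Let F(w1,w2,w3) = w2³/6 + w1·w2·w3 + (1/6)·w1·w3³ + (1/2)·w1²·log(w1) − (3/4)·w1², defined on the domain {w1 > 0} ⊂ ℝ³, and let η = [[0,0,1],[0,1,0],[1,0,0]]. Then F satisfies the WDVV associativity equations: for all α,β,γ,δ ∈ {1,2,3}, ∑_{ρ,σ} F_{αβρ} η^{ρσ} F_{σγδ} = ∑_{ρ,σ} F_{δβρ} η^{ρσ} F_{σγα}. -/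
noncomputable def Fw : (Fin 3 → ℝ) → ℝ := fun w =>
  (w 1)^3 / 6 + (w 0) * (w 1) * (w 2) + (1/6) * (w 0) * (w 2)^3
    + (1/2) * (w 0)^2 * Real.log (w 0) - (3/4) * (w 0)^2

noncomputable def G : Fin 3 → (Fin 3 → ℝ) → ℝ :=
  ![fun x => x 1 * x 2 + 1/6 * (x 2)^3 + x 0 * Real.log (x 0) - x 0,
    fun x => (x 1)^2 / 2 + x 0 * x 2,
    fun x => x 0 * x 1 + 1/2 * x 0 * (x 2)^2]

noncomputable def H : Fin 3 → Fin 3 → (Fin 3 → ℝ) → ℝ :=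
  ![![fun x => Real.log (x 0), fun x => x 2, fun x => x 1 + (x 2)^2 / 2],
    ![fun x => x 2, fun x => x 1, fun x => x 0],
    ![fun x => x 1 + (x 2)^2 / 2, fun x => x 0, fun x => x 0 * x 2]]

noncomputable def C : Fin 3 → Fin 3 → Fin 3 → (Fin 3 → ℝ) → ℝ :=
  ![![![fun x => (x 0)⁻¹, fun _ => 0, fun _ => 0],
     ![fun _ => 0, fun _ => 0, fun _ => 1],
     ![fun _ => 0, fun _ => 1, fun x => x 2]],
    ![![fun _ => 0, fun _ => 0, fun _ => 1],
     ![fun _ => 0, fun _ => 1, fun _ => 0],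
     ![fun _ => 1, fun _ => 0, fun _ => 0]],
    ![![fun _ => 0, fun _ => 1, fun x => x 2],
     ![fun _ => 1, fun _ => 0, fun _ => 0],
     ![fun x => x 2, fun _ => 0, fun x => x 0]]]

lemma hasDerivAt_of_eq {f : ℝ → ℝ} {a b x : ℝ} (h : HasDerivAt f a x) (e : a = b) :
    HasDerivAt f b x := e ▸ h

lemma pd_congr (i : Fin 3) {f g : (Fin 3 → ℝ) → ℝ} (x : Fin 3 → ℝ) (hx : x 0 > 0)
    (h : ∀ y : Fin 3 → ℝ, y 0 > 0 → f y = g y) : pd i f x = pd i g x := by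
  unfold pd
  apply Filter.EventuallyEq.deriv_eq
  by_cases hi : i = 0
  · subst hi
    filter_upwards [eventually_gt_nhds hx] with t ht
    exact h _ (by simpa using ht)
  · filter_upwards with t
    exact h _ (by rwa [Function.update_of_ne (Ne.symm hi)])

lemma pdF (ρ : Fin 3) (x : Fin 3 → ℝ) (hx : x 0 > 0) : pd ρ Fw x = G ρ x := by
  fin_cases ρ
  · show deriv (fun t => Fw (Function.update x 0 t)) (x 0) = _
    have h : (fun t => Fw (Function.update x 0 t))
        = (fun t => (x 1)^3 / 6 + t * x 1 * x 2 + 1/6 * t * (x 2)^3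
            + 1/2 * t^2 * Real.log t - 3/4 * t^2) := by
      funext t; simp [Fw]
    rw [h]
    have hd : HasDerivAt (fun t : ℝ => (x 1)^3 / 6 + t * x 1 * x 2 + 1/6 * t * (x 2)^3
        + 1/2 * t^2 * Real.log t - 3/4 * t^2)
        (x 1 * x 2 + 1/6 * (x 2)^3 + x 0 * Real.log (x 0) - x 0) (x 0) := by
      refine hasDerivAt_of_eq ((((hasDerivAt_const (x 0) ((x 1)^3/6)).add
        (((hasDerivAt_id (x 0)).mul_const (x 1)).mul_const (x 2))).add
        (((hasDerivAt_id (x 0)).const_mul (1/6)).mul_const ((x 2)^3))).add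
        (((hasDerivAt_pow 2 (x 0)).const_mul (1/2)).mul (Real.hasDerivAt_log hx.ne'))
        |>.sub ((hasDerivAt_pow 2 (x 0)).const_mul (3/4))) ?_
      field_simp
      ring
    rw [hd.deriv]
    simp [G]
  · show deriv (fun t => Fw (Function.update x 1 t)) (x 1) = _
    have h : (fun t => Fw (Function.update x 1 t))
        = (fun t => t^3 / 6 + x 0 * t * x 2 + (1/6 * x 0 * (x 2)^3
            + 1/2 * (x 0)^2 * Real.log (x 0) - 3/4 * (x 0)^2)) := by
      funext t; simp [Fw]; ring
    rw [h]
    have hd : HasDerivAt (fun t : ℝ => t^3 / 6 + x 0 * t * x 2 + (1/6 * x 0 * (x 2)^3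
        + 1/2 * (x 0)^2 * Real.log (x 0) - 3/4 * (x 0)^2))
        ((x 1)^2 / 2 + x 0 * x 2) (x 1) := by
      refine hasDerivAt_of_eq ((((hasDerivAt_pow 3 (x 1)).div_const 6).add
        ((((hasDerivAt_id (x 1)).const_mul (x 0)).mul_const (x 2)))).add
        (hasDerivAt_const (x 1) _)) ?_
      push_cast
      ring
    rw [hd.deriv]
    simp [G]
  · show deriv (fun t => Fw (Function.update x 2 t)) (x 2) = _
    have h : (fun t => Fw (Function.update x 2 t))
        = (fun t => ((x 1)^3 / 6 + 1/2 * (x 0)^2 * Real.log (x 0) - 3/4 * (x 0)^2)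
            + x 0 * x 1 * t + 1/6 * x 0 * t^3) := by
      funext t; simp [Fw]; ring
    rw [h]
    have hd : HasDerivAt (fun t : ℝ => ((x 1)^3 / 6 + 1/2 * (x 0)^2 * Real.log (x 0)
        - 3/4 * (x 0)^2) + x 0 * x 1 * t + 1/6 * x 0 * t^3)
        (x 0 * x 1 + 1/2 * x 0 * (x 2)^2) (x 2) := by
      refine hasDerivAt_of_eq (((hasDerivAt_const (x 2) _).add
        ((hasDerivAt_id (x 2)).const_mul (x 0 * x 1))).add
        ((hasDerivAt_pow 3 (x 2)).const_mul (1/6 * x 0))) ?_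
      push_cast
      ring
    rw [hd.deriv]
    simp [G]


lemma pdG (β ρ : Fin 3) (x : Fin 3 → ℝ) (hx : x 0 > 0) : pd β (G ρ) x = H β ρ x := by
  fin_cases β <;> fin_cases ρ
  · -- β=0 ρ=0
    show deriv (fun t => G 0 (Function.update x 0 t)) (x 0) = _
    have h : (fun t => G 0 (Function.update x 0 t))
        = (fun t => x 1 * x 2 + 1/6 * (x 2)^3 + t * Real.log t - t) := by
      funext t; simp [G]; try ring
    rw [h]
    have hd : HasDerivAt (fun t : ℝ => x 1 * x 2 + 1/6 * (x 2)^3 + t * Real.log t - t)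
        (Real.log (x 0)) (x 0) := by
      refine hasDerivAt_of_eq (((hasDerivAt_const (x 0) (x 1 * x 2)).add
        (hasDerivAt_const (x 0) (1/6 * (x 2)^3))).add
        ((hasDerivAt_id (x 0)).mul (Real.hasDerivAt_log hx.ne')) |>.sub
        (hasDerivAt_id (x 0))) ?_
      field_simp
      simp only [id]; ring
    rw [hd.deriv]; simp [H]
  · -- β=0 ρ=1
    show deriv (fun t => G 1 (Function.update x 0 t)) (x 0) = _
    have h : (fun t => G 1 (Function.update x 0 t))
        = (fun t => (x 1)^2/2 + t * x 2) := by
      funext t; simp [G]; try ring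
    rw [h]
    have hd : HasDerivAt (fun t : ℝ => (x 1)^2/2 + t * x 2) (x 2) (x 0) := by
      refine hasDerivAt_of_eq (((hasDerivAt_id (x 0)).mul_const (x 2)).const_add
        ((x 1)^2/2)) ?_
      ring
    rw [hd.deriv]; simp [H]
  · -- β=0 ρ=2
    show deriv (fun t => G 2 (Function.update x 0 t)) (x 0) = _
    have h : (fun t => G 2 (Function.update x 0 t))
        = (fun t => t * x 1 + 1/2 * t * (x 2)^2) := by
      funext t; simp [G]; try ring
    rw [h]
    have hd : HasDerivAt (fun t : ℝ => t * x 1 + 1/2 * t * (x 2)^2)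
        (x 1 + (x 2)^2/2) (x 0) := by
      refine hasDerivAt_of_eq (((hasDerivAt_id (x 0)).mul_const (x 1)).add
        (((hasDerivAt_id (x 0)).const_mul (1/2)).mul_const ((x 2)^2))) ?_
      ring
    rw [hd.deriv]; simp [H]
  · -- β=1 ρ=0
    show deriv (fun t => G 0 (Function.update x 1 t)) (x 1) = _
    have h : (fun t => G 0 (Function.update x 1 t))
        = (fun t => t * x 2 + 1/6 * (x 2)^3 + x 0 * Real.log (x 0) - x 0) := by
      funext t; simp [G]; try ring
    rw [h]
    have hd : HasDerivAt (fun t : ℝ => t * x 2 + 1/6 * (x 2)^3 + x 0 * Real.log (x 0) - x 0)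
        (x 2) (x 1) := by
      refine hasDerivAt_of_eq ((((hasDerivAt_id (x 1)).mul_const (x 2)).add_const
        (1/6 * (x 2)^3) |>.add_const (x 0 * Real.log (x 0))).sub_const (x 0)) ?_
      ring
    rw [hd.deriv]; simp [H]
  · -- β=1 ρ=1
    show deriv (fun t => G 1 (Function.update x 1 t)) (x 1) = _
    have h : (fun t => G 1 (Function.update x 1 t))
        = (fun t => t^2/2 + x 0 * x 2) := by
      funext t; simp [G]; try ring
    rw [h]
    have hd : HasDerivAt (fun t : ℝ => t^2/2 + x 0 * x 2) (x 1) (x 1) := by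
      refine hasDerivAt_of_eq (((hasDerivAt_pow 2 (x 1)).div_const 2).add_const
        (x 0 * x 2)) ?_
      push_cast; ring
    rw [hd.deriv]; simp [H]
  · -- β=1 ρ=2
    show deriv (fun t => G 2 (Function.update x 1 t)) (x 1) = _
    have h : (fun t => G 2 (Function.update x 1 t))
        = (fun t => x 0 * t + 1/2 * x 0 * (x 2)^2) := by
      funext t; simp [G]; try ring
    rw [h]
    have hd : HasDerivAt (fun t : ℝ => x 0 * t + 1/2 * x 0 * (x 2)^2) (x 0) (x 1) := by
      refine hasDerivAt_of_eq (((hasDerivAt_id (x 1)).const_mul (x 0)).add_const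
        (1/2 * x 0 * (x 2)^2)) ?_
      ring
    rw [hd.deriv]; simp [H]
  · -- β=2 ρ=0
    show deriv (fun t => G 0 (Function.update x 2 t)) (x 2) = _
    have h : (fun t => G 0 (Function.update x 2 t))
        = (fun t => x 1 * t + 1/6 * t^3 + x 0 * Real.log (x 0) - x 0) := by
      funext t; simp [G]; try ring
    rw [h]
    have hd : HasDerivAt (fun t : ℝ => x 1 * t + 1/6 * t^3 + x 0 * Real.log (x 0) - x 0)
        (x 1 + (x 2)^2/2) (x 2) := by
      refine hasDerivAt_of_eq ((((hasDerivAt_id (x 2)).const_mul (x 1)).add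
        ((hasDerivAt_pow 3 (x 2)).const_mul (1/6)) |>.add_const
        (x 0 * Real.log (x 0))).sub_const (x 0)) ?_
      push_cast; ring
    rw [hd.deriv]; simp [H]
  · -- β=2 ρ=1
    show deriv (fun t => G 1 (Function.update x 2 t)) (x 2) = _
    have h : (fun t => G 1 (Function.update x 2 t))
        = (fun t => (x 1)^2/2 + x 0 * t) := by
      funext t; simp [G]; try ring
    rw [h]
    have hd : HasDerivAt (fun t : ℝ => (x 1)^2/2 + x 0 * t) (x 0) (x 2) := by
      refine hasDerivAt_of_eq (((hasDerivAt_id (x 2)).const_mul (x 0)).const_add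
        ((x 1)^2/2)) ?_
      ring
    rw [hd.deriv]; simp [H]
  · -- β=2 ρ=2
    show deriv (fun t => G 2 (Function.update x 2 t)) (x 2) = _
    have h : (fun t => G 2 (Function.update x 2 t))
        = (fun t => x 0 * x 1 + 1/2 * x 0 * t^2) := by
      funext t; simp [G]; try ring
    rw [h]
    have hd : HasDerivAt (fun t : ℝ => x 0 * x 1 + 1/2 * x 0 * t^2) (x 0 * x 2) (x 2) := by
      refine hasDerivAt_of_eq (((hasDerivAt_pow 2 (x 2)).const_mul (1/2 * x 0)).const_add
        (x 0 * x 1)) ?_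
      push_cast; ring
    rw [hd.deriv]; simp [H]

lemma dlog (y : ℝ) : deriv (fun t : ℝ => Real.log t) y = y⁻¹ := by
  simpa using Real.deriv_log y
lemma dtc (c y : ℝ) : deriv (fun t : ℝ => t * c) y = c := by
  simpa using ((hasDerivAt_id y).mul_const c).deriv
lemma dct (c y : ℝ) : deriv (fun t : ℝ => c * t) y = c := by
  simpa using ((hasDerivAt_id y).const_mul c).deriv
lemma dtadd (c y : ℝ) : deriv (fun t : ℝ => t + c) y = 1 := by
  simpa using ((hasDerivAt_id y).add_const c).deriv
lemma dsq (c y : ℝ) : deriv (fun t : ℝ => c + t^2/2) y = y := by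
  have := ((hasDerivAt_pow 2 y).div_const 2).const_add c
  simpa using this.deriv

lemma pdH (α β ρ : Fin 3) (x : Fin 3 → ℝ) (hx : x 0 > 0) : pd α (H β ρ) x = C α β ρ x := by
  fin_cases β <;> fin_cases ρ <;> fin_cases α <;>
    simp [pd, H, C, dlog, dtc, dct, dtadd, dsq, Matrix.vecHead, Matrix.vecTail]

lemma pd3_s1 (α β ρ : Fin 3) (x : Fin 3 → ℝ) (hx : x 0 > 0) :
    pd α (pd β (pd ρ Fw)) x = C α β ρ x := by
  have h2 : ∀ y : Fin 3 → ℝ, y 0 > 0 → pd β (pd ρ Fw) y = H β ρ y := by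
    intro y hy
    rw [pd_congr β y hy (fun z hz => pdF ρ z hz)]
    exact pdG β ρ y hy
  rw [pd_congr α x hx h2]
  exact pdH α β ρ x hx

set_option maxHeartbeats 1000000 in
lemma key (x : Fin 3 → ℝ) (h0 : x 0 ≠ 0) (α β γ δ : Fin 3) :
    ∑ ρ : Fin 3, ∑ σ : Fin 3,
        C α β ρ x * (![![0,0,1], ![0,1,0], ![1,0,0]] : Fin 3 → Fin 3 → ℝ) ρ σ * C σ γ δ x
      = ∑ ρ : Fin 3, ∑ σ : Fin 3,
        C δ β ρ x * (![![0,0,1], ![0,1,0], ![1,0,0]] : Fin 3 → Fin 3 → ℝ) ρ σ * C σ γ α x := by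
  fin_cases α <;> fin_cases β <;> fin_cases γ <;> fin_cases δ <;>
    · simp [C, Fin.sum_univ_three, Matrix.vecHead, Matrix.vecTail]
      try field_simp

theorem wdvv_S2_P1_orbifold :
    let F : (Fin 3 → ℝ) → ℝ := fun w =>
      (w 1)^3 / 6 + (w 0) * (w 1) * (w 2) + (1/6) * (w 0) * (w 2)^3
        + (1/2) * (w 0)^2 * Real.log (w 0) - (3/4) * (w 0)^2
    let η : Fin 3 → Fin 3 → ℝ := ![![0,0,1], ![0,1,0], ![1,0,0]]
    ∀ (x : Fin 3 → ℝ), x 0 > 0 → ∀ (α β γ δ : Fin 3),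
      ∑ ρ : Fin 3, ∑ σ : Fin 3,
          pd α (pd β (pd ρ F)) x * η ρ σ * pd σ (pd γ (pd δ F)) x
        = ∑ ρ : Fin 3, ∑ σ : Fin 3,
          pd δ (pd β (pd ρ F)) x * η ρ σ * pd σ (pd γ (pd α F)) x := by
  intro F η x hx α β γ δ
  have hF : F = Fw := rfl
  have hη : η = ![![0,0,1], ![0,1,0], ![1,0,0]] := rfl
  rw [hF, hη]
  simp only [show ∀ a b r, pd a (pd b (pd r Fw)) x = C a b r x from
    fun a b r => pd3_s1 a b r x hx]
  exact key x (ne_of_gt hx) α β γ δ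
end

section
/- Let F(v1,v2) = (1/2)·v1²·v2 + v2⁴/72 on ℝ², and let G(u1,u2) = (1/2)·u2²·u1 + (4/5)·√(2/3)·u1^{5/2} on {u1 > 0}. Define the change of variables u1 = v2²/6, u2 = v1 (valid for v2 > 0). Then all corresponding second partial derivatives agree: ∂²G/∂u1² evaluated at (v2²/6, v1) equals ∂²F/∂v1² = v2; ∂²G/∂u1∂u2 equals ∂²F/∂v1∂v2 = v1; and ∂²G/∂u2² equals ∂²F/∂v2² = v2²/6. -/
open Real

-- derivative of x ^ p (rpow) for p ≥ 1, as a function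
lemma deriv_rpow_fun (p : ℝ) (hp : 1 ≤ p) :
    deriv (fun x : ℝ => x ^ p) = fun x => p * x ^ (p - 1) := by
  funext x
  exact (Real.hasDerivAt_rpow_const (Or.inr hp)).deriv

theorem legendre_A2_second_derivatives (v1 v2 : ℝ) (h : v2 > 0) :
    let F : ℝ → ℝ → ℝ := fun a b => (1/2) * a^2 * b + b^4 / 72
    let G : ℝ → ℝ → ℝ := fun a b =>
      (1/2) * b^2 * a + (4/5) * Real.sqrt (2/3) * a ^ ((5:ℝ)/2)
    let u1 : ℝ := v2^2 / 6
    let u2 : ℝ := v1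
    (deriv (deriv (fun a => G a u2)) u1 = deriv (deriv (fun a => F a v2)) v1
      ∧ deriv (deriv (fun a => F a v2)) v1 = v2)
    ∧ (deriv (fun a => deriv (fun b => G a b) u2) u1
        = deriv (fun a => deriv (fun b => F a b) v2) v1
      ∧ deriv (fun a => deriv (fun b => F a b) v2) v1 = v1)
    ∧ (deriv (deriv (fun b => G u1 b)) u2 = deriv (deriv (fun b => F v1 b)) v2
      ∧ deriv (deriv (fun b => F v1 b)) v2 = v2^2 / 6) := by
  intro F G u1 u2
  have hu1 : u1 = v2^2/6 := rfl
  have hu1pos : (0:ℝ) < u1 := by simp only [hu1]; positivity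
  -- first derivatives (as functions)
  have hGa : deriv (fun a => G a u2)
      = fun a => (1/2) * u2^2 + 2 * Real.sqrt (2/3) * a ^ ((3:ℝ)/2) := by
    funext a
    have h1 : HasDerivAt (fun a : ℝ => (1/2) * u2^2 * a) ((1/2) * u2^2) a := by
      simpa using (hasDerivAt_id a).const_mul ((1/2) * u2^2)
    have h2 : HasDerivAt (fun a : ℝ => (4/5) * Real.sqrt (2/3) * a ^ ((5:ℝ)/2))
        ((4/5) * Real.sqrt (2/3) * ((5:ℝ)/2 * a ^ ((5:ℝ)/2 - 1))) a :=
      (Real.hasDerivAt_rpow_const (Or.inr (by norm_num))).const_mul _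
    have := (h1.add h2).deriv
    simp only [Pi.add_def] at this
    rw [show (fun a : ℝ => (1/2) * u2^2 * a + (4/5) * Real.sqrt (2/3) * a ^ ((5:ℝ)/2))
        = fun a => G a u2 from rfl] at this
    rw [this]
    norm_num
    ring
  have hGaa : deriv (deriv (fun a => G a u2)) u1 = 3 * Real.sqrt (2/3) * u1 ^ ((1:ℝ)/2) := by
    rw [hGa]
    have h2 : HasDerivAt (fun a : ℝ => 2 * Real.sqrt (2/3) * a ^ ((3:ℝ)/2))
        (2 * Real.sqrt (2/3) * ((3:ℝ)/2 * u1 ^ ((3:ℝ)/2 - 1))) u1 :=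
      (Real.hasDerivAt_rpow_const (Or.inr (by norm_num))).const_mul _
    have h1 : HasDerivAt (fun _ : ℝ => (1/2) * u2^2) 0 u1 := hasDerivAt_const _ _
    have := (h1.add h2).deriv
    simp only [Pi.add_def] at this
    rw [this]
    norm_num
    ring
  have hval : 3 * Real.sqrt (2/3) * u1 ^ ((1:ℝ)/2) = v2 := by
    rw [hu1, ← Real.sqrt_eq_rpow, mul_assoc,
      ← Real.sqrt_mul (by norm_num : (0:ℝ) ≤ 2/3),
      show (2/3 * (v2^2/6) : ℝ) = (v2/3)^2 by ring,
      Real.sqrt_sq (by positivity)]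
    ring
  -- F a-derivatives
  have hFa : deriv (fun a => F a v2) = fun a => a * v2 := by
    funext a
    have h1 : HasDerivAt (fun a : ℝ => (1/2) * a^2 * v2) ((1/2) * (2 * a^1) * v2) a :=
      ((hasDerivAt_pow 2 a).const_mul (1/2)).mul_const v2
    have h2 : HasDerivAt (fun _ : ℝ => v2^4 / 72) 0 a := hasDerivAt_const _ _
    have := (h1.add h2).deriv
    simp only [Pi.add_def] at this
    rw [show (fun a : ℝ => (1/2) * a^2 * v2 + v2^4/72) = fun a => F a v2 from rfl] at this
    rw [this]; ring
  have hFaa : deriv (deriv (fun a => F a v2)) v1 = v2 := by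
    rw [hFa]
    have : HasDerivAt (fun a : ℝ => a * v2) (1 * v2) v1 := (hasDerivAt_id v1).mul_const v2
    rw [this.deriv]; ring
  -- mixed derivatives
  have hGb : ∀ a : ℝ, deriv (fun b => G a b) u2 = u2 * a := by
    intro a
    have h1 : HasDerivAt (fun b : ℝ => (1/2) * b^2 * a) ((1/2) * (2 * u2^1) * a) u2 :=
      ((hasDerivAt_pow 2 u2).const_mul (1/2)).mul_const a
    have h2 : HasDerivAt (fun _ : ℝ => (4/5) * Real.sqrt (2/3) * a ^ ((5:ℝ)/2)) 0 u2 :=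
      hasDerivAt_const _ _
    have := (h1.add h2).deriv
    simp only [Pi.add_def] at this
    rw [show (fun b : ℝ => (1/2) * b^2 * a + (4/5) * Real.sqrt (2/3) * a ^ ((5:ℝ)/2))
        = fun b => G a b from rfl] at this
    rw [this]; ring
  have hGmix : deriv (fun a => deriv (fun b => G a b) u2) u1 = u2 := by
    have : (fun a => deriv (fun b => G a b) u2) = fun a => u2 * a := funext hGb
    rw [this]
    have : HasDerivAt (fun a : ℝ => u2 * a) u2 u1 := by
      simpa using (hasDerivAt_id u1).const_mul u2
    exact this.deriv
  have hFb : ∀ a : ℝ, deriv (fun b => F a b) v2 = (1/2) * a^2 + v2^3/18 := by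
    intro a
    have h1 : HasDerivAt (fun b : ℝ => (1/2) * a^2 * b) ((1/2) * a^2) v2 := by
      simpa using (hasDerivAt_id v2).const_mul ((1/2) * a^2)
    have h2 : HasDerivAt (fun b : ℝ => b^4 / 72) ((4 * v2^3) / 72) v2 := by
      simpa using (hasDerivAt_pow 4 v2).div_const 72
    have := (h1.add h2).deriv
    simp only [Pi.add_def] at this
    rw [show (fun b : ℝ => (1/2) * a^2 * b + b^4/72) = fun b => F a b from rfl] at this
    rw [this]; ring
  have hFmix : deriv (fun a => deriv (fun b => F a b) v2) v1 = v1 := by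
    have : (fun a => deriv (fun b => F a b) v2) = fun a => (1/2) * a^2 + v2^3/18 :=
      funext hFb
    rw [this]
    have h1 : HasDerivAt (fun a : ℝ => (1/2) * a^2) ((1/2) * (2 * v1^1)) v1 :=
      (hasDerivAt_pow 2 v1).const_mul (1/2)
    have h2 : HasDerivAt (fun _ : ℝ => v2^3/18) 0 v1 := hasDerivAt_const _ _
    have := (h1.add h2).deriv
    simp only [Pi.add_def] at this
    rw [this]; ring
  -- bb derivatives
  have hGbb : deriv (deriv (fun b => G u1 b)) u2 = u1 := by
    have hG1 : deriv (fun b => G u1 b) = fun b => b * u1 := by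
      funext b
      have h1 : HasDerivAt (fun b : ℝ => (1/2) * b^2 * u1) ((1/2) * (2 * b^1) * u1) b :=
        ((hasDerivAt_pow 2 b).const_mul (1/2)).mul_const u1
      have h2 : HasDerivAt (fun _ : ℝ => (4/5) * Real.sqrt (2/3) * u1 ^ ((5:ℝ)/2)) 0 b :=
        hasDerivAt_const _ _
      have := (h1.add h2).deriv
      simp only [Pi.add_def] at this
      rw [show (fun b : ℝ => (1/2) * b^2 * u1 + (4/5) * Real.sqrt (2/3) * u1 ^ ((5:ℝ)/2))
          = fun b => G u1 b from rfl] at this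
      rw [this]; ring
    rw [hG1]
    have : HasDerivAt (fun b : ℝ => b * u1) (1 * u1) u2 := (hasDerivAt_id u2).mul_const u1
    rw [this.deriv]; ring
  have hFbb : deriv (deriv (fun b => F v1 b)) v2 = v2^2/6 := by
    have hF1 : deriv (fun b => F v1 b) = fun b => (1/2) * v1^2 + b^3/18 := by
      funext b
      have h1 : HasDerivAt (fun b : ℝ => (1/2) * v1^2 * b) ((1/2) * v1^2) b := by
        simpa using (hasDerivAt_id b).const_mul ((1/2) * v1^2)
      have h2 : HasDerivAt (fun b : ℝ => b^4 / 72) ((4 * b^3) / 72) b := by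
        simpa using (hasDerivAt_pow 4 b).div_const 72
      have := (h1.add h2).deriv
      simp only [Pi.add_def] at this
      rw [show (fun b : ℝ => (1/2) * v1^2 * b + b^4/72) = fun b => F v1 b from rfl] at this
      rw [this]; ring
    rw [hF1]
    have h1 : HasDerivAt (fun _ : ℝ => (1/2) * v1^2) 0 v2 := hasDerivAt_const _ _
    have h2 : HasDerivAt (fun b : ℝ => b^3/18) ((3 * v2^2) / 18) v2 := by
      simpa using (hasDerivAt_pow 3 v2).div_const 18
    have := (h1.add h2).deriv
    simp only [Pi.add_def] at this
    rw [this]; ring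
  refine ⟨⟨?_, hFaa⟩, ⟨?_, hFmix⟩, ⟨?_, hFbb⟩⟩
  · rw [hGaa, hval, hFaa]
  · rw [hGmix, hFmix]
  · rw [hGbb, hFbb, hu1]
end

section
/- Let P(q) = 1 − 24·∑_{n≥1} σ(n)·qⁿ as a formal power series in q, where σ(n) is the sum of the positive divisors of n, and let D = q·d/dq be the formal differential operator. Then D³P = P·D²P − (3/2)·(DP)². -/
open PowerSeries

/-- The operator D = q·d/dq on formal power series. -/
noncomputable def Dq (f : PowerSeries ℚ) : PowerSeries ℚ :=
  PowerSeries.X * PowerSeries.derivativeFun f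

namespace ChazyAux

open Finset

def Sg (n : ℕ) : ℚ := ∑ d ∈ n.divisors, (d : ℚ)

abbrev Quad := ℕ × ℕ × ℕ × ℕ

def S (n : ℕ) : Finset Quad :=
  (Finset.Icc 1 n ×ˢ Finset.Icc 1 n ×ˢ Finset.Icc 1 n ×ˢ Finset.Icc 1 n).filter
    fun s => s.1 * s.2.2.1 + s.2.1 * s.2.2.2 = n

lemma mem_S {n : ℕ} {s : Quad} :
    s ∈ S n ↔ 1 ≤ s.1 ∧ 1 ≤ s.2.1 ∧ 1 ≤ s.2.2.1 ∧ 1 ≤ s.2.2.2 ∧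
      s.1 * s.2.2.1 + s.2.1 * s.2.2.2 = n := by
  obtain ⟨a, b, x, y⟩ := s
  simp only [S, Finset.mem_filter, Finset.mem_product, Finset.mem_Icc]
  constructor
  · rintro ⟨⟨⟨h1, -⟩, ⟨h2, -⟩, ⟨h3, -⟩, ⟨h4, -⟩⟩, he⟩
    exact ⟨h1, h2, h3, h4, he⟩
  · rintro ⟨h1, h2, h3, h4, he⟩
    have hax : a * x ≤ n := by omega
    have hby : b * y ≤ n := by omega
    refine ⟨⟨⟨h1, ?_⟩, ⟨h2, ?_⟩, ⟨h3, ?_⟩, ⟨h4, ?_⟩⟩, he⟩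
    · calc a ≤ a * x := Nat.le_mul_of_pos_right a h3
        _ ≤ n := hax
    · calc b ≤ b * y := Nat.le_mul_of_pos_right b h4
        _ ≤ n := hby
    · calc x ≤ a * x := Nat.le_mul_of_pos_left x h1
        _ ≤ n := hax
    · calc y ≤ b * y := Nat.le_mul_of_pos_left y h2
        _ ≤ n := hby

/-- swap bijection: sum over {a<b} of p∘σ equals sum over {b<a} of p. -/
lemma sum_swap_ab (n : ℕ) (p : Quad → ℚ) :
    ∑ s ∈ (S n).filter (fun s => s.1 < s.2.1), p (s.2.1, s.1, s.2.2.2, s.2.2.1)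
      = ∑ s ∈ (S n).filter (fun s => s.2.1 < s.1), p s := by
  refine Finset.sum_nbij' (fun s => (s.2.1, s.1, s.2.2.2, s.2.2.1))
    (fun s => (s.2.1, s.1, s.2.2.2, s.2.2.1)) ?_ ?_ ?_ ?_ ?_
  · intro s hs
    simp only [Finset.mem_filter, mem_S] at hs ⊢
    omega
  · intro s hs
    simp only [Finset.mem_filter, mem_S] at hs ⊢
    omega
  · intro s _; rfl
  · intro s _; rfl
  · intro s _; rfl

/-- φ bijection: {b < a} → {x < y}, (a,b,x,y) ↦ (a-b, b, x, x+y). -/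
lemma sum_phi (n : ℕ) (p : Quad → ℚ) :
    ∑ s ∈ (S n).filter (fun s => s.2.1 < s.1), p (s.1 - s.2.1, s.2.1, s.2.2.1, s.2.2.1 + s.2.2.2)
      = ∑ s ∈ (S n).filter (fun s => s.2.2.1 < s.2.2.2), p s := by
  refine Finset.sum_nbij' (fun s => (s.1 - s.2.1, s.2.1, s.2.2.1, s.2.2.1 + s.2.2.2))
    (fun s => (s.1 + s.2.1, s.2.1, s.2.2.1, s.2.2.2 - s.2.2.1)) ?_ ?_ ?_ ?_ ?_
  · rintro ⟨a, b, x, y⟩ hs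
    simp only [Finset.mem_filter, mem_S] at hs ⊢
    obtain ⟨⟨h1, h2, h3, h4, he⟩, hba⟩ := hs
    refine ⟨⟨by omega, h2, h3, by omega, ?_⟩, by omega⟩
    have : (a - b) * x + b * x = a * x := by
      rw [← Nat.add_mul]; congr 1; omega
    simp only [Nat.mul_add]
    omega
  · rintro ⟨a, b, x, y⟩ hs
    simp only [Finset.mem_filter, mem_S] at hs ⊢
    obtain ⟨⟨h1, h2, h3, h4, he⟩, hxy⟩ := hs
    refine ⟨⟨by omega, h2, h3, by omega, ?_⟩, by omega⟩
    have : b * (y - x) + b * x = b * y := by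
      rw [← Nat.mul_add]; congr 1; omega
    simp only [Nat.add_mul]
    omega
  · rintro ⟨a, b, x, y⟩ hs
    simp only [Finset.mem_filter, mem_S] at hs
    simp only [Prod.mk.injEq, true_and, and_true]
    omega
  · rintro ⟨a, b, x, y⟩ hs
    simp only [Finset.mem_filter, mem_S] at hs
    simp only [Prod.mk.injEq, true_and, and_true]
    omega
  · intro s _; rfl

/-- φ' bijection: {a < b} → {y < x}, (a,b,x,y) ↦ (a, b-a, x+y, y). -/
lemma sum_phi' (n : ℕ) (p : Quad → ℚ) :
    ∑ s ∈ (S n).filter (fun s => s.1 < s.2.1), p (s.1, s.2.1 - s.1, s.2.2.1 + s.2.2.2, s.2.2.2)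
      = ∑ s ∈ (S n).filter (fun s => s.2.2.2 < s.2.2.1), p s := by
  refine Finset.sum_nbij' (fun s => (s.1, s.2.1 - s.1, s.2.2.1 + s.2.2.2, s.2.2.2))
    (fun s => (s.1, s.2.1 + s.1, s.2.2.1 - s.2.2.2, s.2.2.2)) ?_ ?_ ?_ ?_ ?_
  · rintro ⟨a, b, x, y⟩ hs
    simp only [Finset.mem_filter, mem_S] at hs ⊢
    obtain ⟨⟨h1, h2, h3, h4, he⟩, hab⟩ := hs
    refine ⟨⟨h1, by omega, by omega, h4, ?_⟩, by omega⟩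
    have : (b - a) * y + a * y = b * y := by
      rw [← Nat.add_mul]; congr 1; omega
    simp only [Nat.mul_add]
    omega
  · rintro ⟨a, b, x, y⟩ hs
    simp only [Finset.mem_filter, mem_S] at hs ⊢
    obtain ⟨⟨h1, h2, h3, h4, he⟩, hyx⟩ := hs
    refine ⟨⟨h1, by omega, by omega, h4, ?_⟩, by omega⟩
    have : a * (x - y) + a * y = a * x := by
      rw [← Nat.mul_add]; congr 1; omega
    simp only [Nat.add_mul]
    omega
  · rintro ⟨a, b, x, y⟩ hs
    simp only [Finset.mem_filter, mem_S] at hs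
    simp only [Prod.mk.injEq, true_and, and_true]
    omega
  · rintro ⟨a, b, x, y⟩ hs
    simp only [Finset.mem_filter, mem_S] at hs
    simp only [Prod.mk.injEq, true_and, and_true]
    omega
  · intro s _; rfl


lemma sum_trichotomy (t : Finset Quad) (f g : Quad → ℕ) (p : Quad → ℚ) :
    ∑ s ∈ t, p s =
      ∑ s ∈ t.filter (fun s => f s < g s), p s + ∑ s ∈ t.filter (fun s => f s = g s), p s
        + ∑ s ∈ t.filter (fun s => g s < f s), p s := by
  rw [← Finset.sum_filter_add_sum_filter_not t (fun s => f s < g s) p,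
      ← Finset.sum_filter_add_sum_filter_not (t.filter fun s => ¬ f s < g s)
        (fun s => f s = g s) p, Finset.filter_filter, Finset.filter_filter]
  have h1 : (t.filter fun s => ¬ f s < g s ∧ f s = g s) = t.filter fun s => f s = g s := by
    apply Finset.filter_congr; intro x _; constructor
    · rintro ⟨-, h⟩; exact h
    · intro h; exact ⟨by omega, h⟩
  have h2 : (t.filter fun s => ¬ f s < g s ∧ ¬ f s = g s) = t.filter fun s => g s < f s := by
    apply Finset.filter_congr; intro x _; constructor
    · rintro ⟨h, h'⟩; omega
    · intro h; omega
  rw [h1, h2]; ring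

lemma sum_diag_ab (n : ℕ) (p : Quad → ℚ) :
    ∑ s ∈ (S n).filter (fun s => s.1 = s.2.1), p s
      = ∑ z ∈ n.divisors.sigma (fun d => Finset.Ico 1 (n / d)),
          p (z.1, z.1, z.2, n / z.1 - z.2) := by
  refine Finset.sum_nbij' (fun s => (⟨s.1, s.2.2.1⟩ : Σ _ : ℕ, ℕ))
    (fun z => (z.1, z.1, z.2, n / z.1 - z.2)) ?_ ?_ ?_ ?_ ?_
  · rintro ⟨a, b, x, y⟩ hs
    simp only [Finset.mem_filter, mem_S] at hs
    obtain ⟨⟨h1, h2, h3, h4, he⟩, hab⟩ := hs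
    subst hab
    have hn : a * (x + y) = n := by rw [Nat.mul_add]; omega
    have hx : n / a = x + y := by rw [← hn, Nat.mul_div_cancel_left _ (by omega)]
    have hpos : 0 < a * x := Nat.mul_pos h1 h3
    simp only [Finset.mem_sigma, Nat.mem_divisors, Finset.mem_Ico]
    exact ⟨⟨⟨x + y, hn.symm⟩, by omega⟩, by omega⟩
  · rintro ⟨d, x⟩ hz
    simp only [Finset.mem_sigma, Nat.mem_divisors, Finset.mem_Ico] at hz
    obtain ⟨⟨hdvd, hn0⟩, hx1, hxe⟩ := hz
    have hd1 : 1 ≤ d := Nat.pos_of_dvd_of_pos hdvd (by omega)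
    have hdn : d * (n / d) = n := Nat.mul_div_cancel' hdvd
    simp only [Finset.mem_filter, mem_S]
    refine ⟨⟨hd1, hd1, hx1, by omega, ?_⟩, trivial⟩
    have hsum : x + (n / d - x) = n / d := by omega
    rw [← Nat.mul_add, hsum, hdn]
  · rintro ⟨a, b, x, y⟩ hs
    simp only [Finset.mem_filter, mem_S] at hs
    obtain ⟨⟨h1, h2, h3, h4, he⟩, hab⟩ := hs
    subst hab
    have hn : a * (x + y) = n := by rw [Nat.mul_add]; omega
    have hx : n / a = x + y := by rw [← hn, Nat.mul_div_cancel_left _ (by omega)]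
    simp only [Prod.mk.injEq, true_and, and_true]
    omega
  · rintro ⟨d, x⟩ _; rfl
  · rintro ⟨a, b, x, y⟩ hs
    simp only [Finset.mem_filter, mem_S] at hs
    obtain ⟨⟨h1, h2, h3, h4, he⟩, hab⟩ := hs
    subst hab
    have hn : a * (x + y) = n := by rw [Nat.mul_add]; omega
    have hx : n / a = x + y := by rw [← hn, Nat.mul_div_cancel_left _ (by omega)]
    have : ((a, a, x, n / a - x) : Quad) = (a, a, x, y) := by
      simp only [Prod.mk.injEq, true_and]; omega
    simp only [this]

lemma sum_diag_xy (n : ℕ) (p : Quad → ℚ) :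
    ∑ s ∈ (S n).filter (fun s => s.2.2.1 = s.2.2.2), p s
      = ∑ z ∈ n.divisors.sigma (fun d => Finset.Ico 1 (n / d)),
          p (z.2, n / z.1 - z.2, z.1, z.1) := by
  refine Finset.sum_nbij' (fun s => (⟨s.2.2.1, s.1⟩ : Σ _ : ℕ, ℕ))
    (fun z => (z.2, n / z.1 - z.2, z.1, z.1)) ?_ ?_ ?_ ?_ ?_
  · rintro ⟨a, b, x, y⟩ hs
    simp only [Finset.mem_filter, mem_S] at hs
    obtain ⟨⟨h1, h2, h3, h4, he⟩, hxy⟩ := hs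
    subst hxy
    have hn : (a + b) * x = n := by rw [Nat.add_mul]; omega
    have hx : n / x = a + b := by rw [← hn, Nat.mul_div_cancel _ (by omega)]
    have hpos : 0 < a * x := Nat.mul_pos h1 h3
    have hn2 : x * (a + b) = n := by rw [Nat.mul_comm]; exact hn
    simp only [Finset.mem_sigma, Nat.mem_divisors, Finset.mem_Ico]
    exact ⟨⟨⟨a + b, hn2.symm⟩, by omega⟩, by omega⟩
  · rintro ⟨d, a⟩ hz
    simp only [Finset.mem_sigma, Nat.mem_divisors, Finset.mem_Ico] at hz
    obtain ⟨⟨hdvd, hn0⟩, ha1, hae⟩ := hz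
    have hd1 : 1 ≤ d := Nat.pos_of_dvd_of_pos hdvd (by omega)
    have hdn : d * (n / d) = n := Nat.mul_div_cancel' hdvd
    simp only [Finset.mem_filter, mem_S]
    refine ⟨⟨ha1, by omega, hd1, hd1, ?_⟩, trivial⟩
    have hsum : a + (n / d - a) = n / d := by omega
    rw [← Nat.add_mul, hsum, Nat.mul_comm]
    exact hdn
  · rintro ⟨a, b, x, y⟩ hs
    simp only [Finset.mem_filter, mem_S] at hs
    obtain ⟨⟨h1, h2, h3, h4, he⟩, hxy⟩ := hs
    subst hxy
    have hn : (a + b) * x = n := by rw [Nat.add_mul]; omega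
    have hx : n / x = a + b := by rw [← hn, Nat.mul_div_cancel _ (by omega)]
    simp only [Prod.mk.injEq, true_and, and_true]
    omega
  · rintro ⟨d, a⟩ _; rfl
  · rintro ⟨a, b, x, y⟩ hs
    simp only [Finset.mem_filter, mem_S] at hs
    obtain ⟨⟨h1, h2, h3, h4, he⟩, hxy⟩ := hs
    subst hxy
    have hn : (a + b) * x = n := by rw [Nat.add_mul]; omega
    have hx : n / x = a + b := by rw [← hn, Nat.mul_div_cancel _ (by omega)]
    have : ((a, n / x - a, x, x) : Quad) = (a, b, x, x) := by
      simp only [Prod.mk.injEq, true_and, and_true]; omega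
    simp only [this]


/-- 12·F₀ where F₀ = ab(a²x² + b²y² − 3abxy). -/
def fF : Quad → ℚ := fun s =>
  12 * ((s.1 : ℚ)^3 * (s.2.1 : ℚ) * (s.2.2.1 : ℚ)^2
    + (s.1 : ℚ) * (s.2.1 : ℚ)^3 * (s.2.2.2 : ℚ)^2
    - 3 * (s.1 : ℚ)^2 * (s.2.1 : ℚ)^2 * (s.2.2.1 : ℚ) * (s.2.2.2 : ℚ))

/-- The telescoping potential H. -/
def fH : Quad → ℚ := fun s =>
  -2 * (s.2.1 : ℚ)^4 * (s.2.2.2 : ℚ)^2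
  - 12 * (s.1 : ℚ) * (s.2.1 : ℚ)^3 * (s.2.2.2 : ℚ)^2
  + 16 * (s.1 : ℚ) * (s.2.1 : ℚ)^3 * (s.2.2.1 : ℚ) * (s.2.2.2 : ℚ)
  - 12 * (s.1 : ℚ)^2 * (s.2.1 : ℚ)^2 * (s.2.2.2 : ℚ)^2
  + 18 * (s.1 : ℚ)^2 * (s.2.1 : ℚ)^2 * (s.2.2.1 : ℚ) * (s.2.2.2 : ℚ)

/-- The antisymmetric error term A. -/
def fA : Quad → ℚ := fun s =>
  -2 * (s.2.1 : ℚ)^4 * (s.2.2.1 : ℚ) * (s.2.2.2 : ℚ)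
  - 8 * (s.1 : ℚ) * (s.2.1 : ℚ)^3 * (s.2.2.1 : ℚ)^2
  - 12 * (s.1 : ℚ) * (s.2.1 : ℚ)^3 * (s.2.2.1 : ℚ) * (s.2.2.2 : ℚ)
  + 12 * (s.1 : ℚ) * (s.2.1 : ℚ)^3 * (s.2.2.2 : ℚ)^2
  + 6 * (s.1 : ℚ)^2 * (s.2.1 : ℚ)^2 * (s.2.2.1 : ℚ)^2
  + 12 * (s.1 : ℚ)^2 * (s.2.1 : ℚ)^2 * (s.2.2.1 : ℚ) * (s.2.2.2 : ℚ)
  - 12 * (s.1 : ℚ)^3 * (s.2.1 : ℚ) * (s.2.2.1 : ℚ)^2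

lemma pointwise1 (a b x y : ℕ) (hba : b < a) :
    fF (a, b, x, y) = fH (a - b, b, x, x + y) - fH (a, b, x, y) - fA (a, b, x, y) := by
  rcases Nat.exists_eq_add_of_lt hba with ⟨c, rfl⟩
  have h : b + c + 1 - b = c + 1 := by omega
  simp only [fF, fH, fA, h]
  push_cast
  ring

lemma pointwise2 (a b x y : ℕ) (hab : a < b) :
    fF (a, b, x, y) = fH (a, b - a, x + y, y) - fH (a, b, x, y) + fA (b, a, y, x) := by
  rcases Nat.exists_eq_add_of_lt hab with ⟨c, rfl⟩
  have h : a + c + 1 - a = c + 1 := by omega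
  simp only [fF, fH, fA, h]
  push_cast
  ring

/-- Telescoping: the full sum reduces to the two diagonals. -/
lemma sum_S_fF (n : ℕ) :
    ∑ s ∈ S n, fF s
      = (∑ s ∈ (S n).filter (fun s => s.1 = s.2.1), (fF s + fH s))
        - ∑ s ∈ (S n).filter (fun s => s.2.2.1 = s.2.2.2), fH s := by
  have tri1 := sum_trichotomy (S n) (fun s => s.1) (fun s => s.2.1) fF
  have tri2 := sum_trichotomy (S n) (fun s => s.1) (fun s => s.2.1) fH
  have tri3 := sum_trichotomy (S n) (fun s => s.2.2.1) (fun s => s.2.2.2) fH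
  have e1 : ∑ s ∈ (S n).filter (fun s => s.2.1 < s.1), fF s
      = ∑ s ∈ (S n).filter (fun s => s.2.2.1 < s.2.2.2), fH s
        - ∑ s ∈ (S n).filter (fun s => s.2.1 < s.1), fH s
        - ∑ s ∈ (S n).filter (fun s => s.2.1 < s.1), fA s := by
    rw [← sum_phi n fH, ← Finset.sum_sub_distrib, ← Finset.sum_sub_distrib]
    refine Finset.sum_congr rfl ?_
    rintro ⟨a, b, x, y⟩ hs
    simp only [Finset.mem_filter] at hs
    exact pointwise1 a b x y hs.2
  have e2 : ∑ s ∈ (S n).filter (fun s => s.1 < s.2.1), fF s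
      = ∑ s ∈ (S n).filter (fun s => s.2.2.2 < s.2.2.1), fH s
        - ∑ s ∈ (S n).filter (fun s => s.1 < s.2.1), fH s
        + ∑ s ∈ (S n).filter (fun s => s.2.1 < s.1), fA s := by
    rw [← sum_phi' n fH, ← sum_swap_ab n fA, ← Finset.sum_sub_distrib,
      ← Finset.sum_add_distrib]
    refine Finset.sum_congr rfl ?_
    rintro ⟨a, b, x, y⟩ hs
    simp only [Finset.mem_filter] at hs
    exact pointwise2 a b x y hs.2
  have e3 : ∑ s ∈ (S n).filter (fun s => s.1 = s.2.1), (fF s + fH s)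
      = ∑ s ∈ (S n).filter (fun s => s.1 = s.2.1), fF s
        + ∑ s ∈ (S n).filter (fun s => s.1 = s.2.1), fH s :=
    Finset.sum_add_distrib
  linarith [tri1, tri2, tri3, e1, e2, e3]

/-- Power sums over `range`. -/
lemma sum_range_cubic (e : ℕ) (c0 c1 c2 c3 : ℚ) :
    ∑ x ∈ Finset.range e, (c0 + c1 * (x : ℚ) + c2 * (x : ℚ)^2 + c3 * (x : ℚ)^3)
      = c0 * e + c1 * ((e : ℚ) * (e - 1) / 2) + c2 * ((e : ℚ) * (e - 1) * (2 * e - 1) / 6)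
        + c3 * ((e : ℚ)^2 * ((e : ℚ) - 1)^2 / 4) := by
  induction e with
  | zero => simp
  | succ m ih =>
    rw [Finset.sum_range_succ, ih]
    push_cast
    ring

lemma sum_Ico_cubic (e : ℕ) (he : 1 ≤ e) (c0 c1 c2 c3 : ℚ) :
    ∑ x ∈ Finset.Ico 1 e, (c0 + c1 * (x : ℚ) + c2 * (x : ℚ)^2 + c3 * (x : ℚ)^3)
      = c0 * ((e : ℚ) - 1) + c1 * ((e : ℚ) * (e - 1) / 2)
        + c2 * ((e : ℚ) * (e - 1) * (2 * e - 1) / 6)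
        + c3 * ((e : ℚ)^2 * ((e : ℚ) - 1)^2 / 4) := by
  have h0 : (0 : ℕ) < e := he
  have := Finset.sum_eq_sum_Ico_succ_bot h0
    (fun x => c0 + c1 * (x : ℚ) + c2 * (x : ℚ)^2 + c3 * (x : ℚ)^3)
  rw [← Finset.range_eq_Ico] at this
  rw [sum_range_cubic] at this
  push_cast at this
  linarith [this]


/-- The arithmetic core: Σ_{ax+by=n} 12ab(a²x²+b²y²−3abxy) = n²(1−n)σ(n). -/
lemma core (n : ℕ) (hn : 1 ≤ n) :
    ∑ s ∈ S n, fF s = (n : ℚ)^2 * (1 - (n : ℚ)) * Sg n := by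
  rw [sum_S_fF, sum_diag_ab n (fun s => fF s + fH s), sum_diag_xy n fH]
  rw [Finset.sum_sigma, Finset.sum_sigma, ← Finset.sum_sub_distrib]
  have step : ∀ d ∈ n.divisors,
      ((∑ x ∈ Finset.Ico 1 (n / d), (fF (d, d, x, n / d - x) + fH (d, d, x, n / d - x)))
        - ∑ a ∈ Finset.Ico 1 (n / d), fH (a, n / d - a, d, d))
      = (n : ℚ)^2 * (d : ℚ)^2 - (n : ℚ)^3 * (d : ℚ)
        - (n : ℚ)^2 * ((n / d : ℕ) : ℚ)^2 + (n : ℚ)^2 * ((n / d : ℕ) : ℚ) := by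
    intro d hd
    obtain ⟨hdvd, hn0⟩ := Nat.mem_divisors.mp hd
    have hd1 : 1 ≤ d := Nat.pos_of_dvd_of_pos hdvd (by omega)
    set e := n / d with hedef
    have he1 : 1 ≤ e := (Nat.one_le_div_iff hd1).mpr (Nat.le_of_dvd (by omega) hdvd)
    have hde : (d : ℚ) * (e : ℚ) = (n : ℚ) := by
      rw [← Nat.cast_mul, Nat.mul_div_cancel' hdvd]
    have i1 : ∑ x ∈ Finset.Ico 1 e, (fF (d, d, x, e - x) + fH (d, d, x, e - x))
        = (d : ℚ)^4 * (e : ℚ)^2 - (d : ℚ)^4 * (e : ℚ)^3 := by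
      have hcong : ∀ x ∈ Finset.Ico 1 e, fF (d, d, x, e - x) + fH (d, d, x, e - x)
          = (-14 * (d : ℚ)^4 * (e : ℚ)^2) + (26 * (d : ℚ)^4 * (e : ℚ)) * (x : ℚ)
            + 0 * (x : ℚ)^2 + 0 * (x : ℚ)^3 := by
        intro x hx
        have hxe : x ≤ e := le_of_lt (Finset.mem_Ico.mp hx).2
        simp only [fF, fH]
        rw [Nat.cast_sub hxe]
        ring
      rw [Finset.sum_congr rfl hcong, sum_Ico_cubic e he1]
      ring
    have i2 : ∑ a ∈ Finset.Ico 1 e, fH (a, e - a, d, d)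
        = (d : ℚ)^2 * (e : ℚ)^4 - (d : ℚ)^2 * (e : ℚ)^3 := by
      have hcong : ∀ a ∈ Finset.Ico 1 e, fH (a, e - a, d, d)
          = (-2 * (d : ℚ)^2 * (e : ℚ)^4) + (12 * (d : ℚ)^2 * (e : ℚ)^3) * (a : ℚ)
            + (-18 * (d : ℚ)^2 * (e : ℚ)^2) * (a : ℚ)^2
            + (8 * (d : ℚ)^2 * (e : ℚ)) * (a : ℚ)^3 := by
        intro a ha
        have hae : a ≤ e := le_of_lt (Finset.mem_Ico.mp ha).2
        simp only [fH]
        rw [Nat.cast_sub hae]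
        ring
      rw [Finset.sum_congr rfl hcong, sum_Ico_cubic e he1]
      ring
    rw [i1, i2]
    have hn_eq : (n : ℚ) = (d : ℚ) * (e : ℚ) := hde.symm
    rw [hn_eq]
    ring
  rw [Finset.sum_congr rfl step]
  have r1 : ∑ d ∈ n.divisors, ((n / d : ℕ) : ℚ)^2 = ∑ d ∈ n.divisors, (d : ℚ)^2 :=
    Nat.sum_div_divisors n (fun d => (d : ℚ)^2)
  have r2 : ∑ d ∈ n.divisors, ((n / d : ℕ) : ℚ) = Sg n :=
    Nat.sum_div_divisors n (fun d => (d : ℚ))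
  have expand : ∑ d ∈ n.divisors,
      ((n : ℚ)^2 * (d : ℚ)^2 - (n : ℚ)^3 * (d : ℚ)
        - (n : ℚ)^2 * ((n / d : ℕ) : ℚ)^2 + (n : ℚ)^2 * ((n / d : ℕ) : ℚ))
      = (n : ℚ)^2 * (∑ d ∈ n.divisors, (d : ℚ)^2)
        - (n : ℚ)^3 * (∑ d ∈ n.divisors, (d : ℚ))
        - (n : ℚ)^2 * (∑ d ∈ n.divisors, ((n / d : ℕ) : ℚ)^2)
        + (n : ℚ)^2 * (∑ d ∈ n.divisors, ((n / d : ℕ) : ℚ)) := by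
    simp only [Finset.sum_add_distrib, Finset.sum_sub_distrib, ← Finset.mul_sum]
  rw [expand, r1, r2]
  unfold Sg
  ring


/-- Unfold the double divisor sum into the solution set S. -/
lemma conv_eq (n : ℕ) :
    ∑ z ∈ (Finset.Ico 1 n).sigma
        (fun j => (Nat.divisors j) ×ˢ (Nat.divisors (n - j))),
      (12 * (z.2.1 : ℚ) * (z.2.2 : ℚ) *
        ((z.1 : ℚ)^2 + ((n - z.1 : ℕ) : ℚ)^2 - 3 * (z.1 : ℚ) * ((n - z.1 : ℕ) : ℚ)))
      = ∑ s ∈ S n, fF s := by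
  refine Finset.sum_nbij' (fun z => (z.2.1, z.2.2, z.1 / z.2.1, (n - z.1) / z.2.2))
    (fun s => ⟨s.1 * s.2.2.1, (s.1, s.2.1)⟩) ?_ ?_ ?_ ?_ ?_
  · rintro ⟨j, u, v⟩ hz
    dsimp only
    simp only [Finset.mem_sigma, Finset.mem_product, Finset.mem_Ico, Nat.mem_divisors] at hz
    obtain ⟨⟨hj1, hjn⟩, ⟨hu, hj0⟩, hv, hnj0⟩ := hz
    have hu1 : 1 ≤ u := Nat.pos_of_dvd_of_pos hu (by omega)
    have hv1 : 1 ≤ v := Nat.pos_of_dvd_of_pos hv (by omega)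
    have hux : u * (j / u) = j := Nat.mul_div_cancel' hu
    have hvy : v * ((n - j) / v) = n - j := Nat.mul_div_cancel' hv
    have hx1 : 0 < j / u := Nat.div_pos (Nat.le_of_dvd (by omega) hu) (by omega)
    have hy1 : 0 < (n - j) / v := Nat.div_pos (Nat.le_of_dvd (by omega) hv) (by omega)
    rw [mem_S]
    refine ⟨hu1, hv1, hx1, hy1, ?_⟩
    dsimp only
    omega
  · rintro ⟨a, b, x, y⟩ hs
    dsimp only
    rw [mem_S] at hs
    obtain ⟨h1, h2, h3, h4, he⟩ := hs
    dsimp only at he ⊢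
    have hax : 0 < a * x := Nat.mul_pos h1 h3
    have hby : 0 < b * y := Nat.mul_pos h2 h4
    simp only [Finset.mem_sigma, Finset.mem_product, Finset.mem_Ico, Nat.mem_divisors]
    have h5 : a * x < n := by omega
    have hba : n - a * x = b * y := by omega
    exact ⟨⟨by omega, h5⟩, ⟨dvd_mul_right a x, by omega⟩, ⟨⟨y, hba⟩, by omega⟩⟩
  · rintro ⟨j, u, v⟩ hz
    dsimp only
    simp only [Finset.mem_sigma, Finset.mem_product, Finset.mem_Ico, Nat.mem_divisors] at hz
    obtain ⟨⟨hj1, hjn⟩, ⟨hu, hj0⟩, hv, hnj0⟩ := hz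
    have hux : u * (j / u) = j := Nat.mul_div_cancel' hu
    simp only [hux]
  · rintro ⟨a, b, x, y⟩ hs
    dsimp only
    rw [mem_S] at hs
    dsimp only at hs
    obtain ⟨h1, h2, h3, h4, he⟩ := hs
    have hx : a * x / a = x := Nat.mul_div_cancel_left x (by omega)
    have hby : n - a * x = b * y := by omega
    have hy : (n - a * x) / b = y := by rw [hby]; exact Nat.mul_div_cancel_left y (by omega)
    simp only [hx, hy]
  · rintro ⟨j, u, v⟩ hz
    dsimp only
    simp only [Finset.mem_sigma, Finset.mem_product, Finset.mem_Ico, Nat.mem_divisors] at hz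
    obtain ⟨⟨hj1, hjn⟩, ⟨hu, hj0⟩, hv, hnj0⟩ := hz
    have hu1 : 1 ≤ u := Nat.pos_of_dvd_of_pos hu (by omega)
    have hv1 : 1 ≤ v := Nat.pos_of_dvd_of_pos hv (by omega)
    obtain ⟨x, rfl⟩ : ∃ x, j = u * x := ⟨j / u, (Nat.mul_div_cancel' hu).symm⟩
    have hx' : u * x / u = x := Nat.mul_div_cancel_left x (by omega)
    set w := (n - u * x) / v with hw
    have hvy : v * w = n - u * x := Nat.mul_div_cancel' hv
    simp only [fF, hx']
    rw [← hvy]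
    push_cast
    ring

/-- Reflection j ↦ n − j on Ico 1 n. -/
lemma reflect (n : ℕ) (g : ℕ → ℕ → ℚ) :
    ∑ j ∈ Finset.Ico 1 n, g j (n - j) = ∑ j ∈ Finset.Ico 1 n, g (n - j) j := by
  refine Finset.sum_nbij' (fun j => n - j) (fun j => n - j) ?_ ?_ ?_ ?_ ?_
  · intro j hj; simp only [Finset.mem_Ico] at hj ⊢; omega
  · intro j hj; simp only [Finset.mem_Ico] at hj ⊢; omega
  · intro j hj; simp only [Finset.mem_Ico] at hj; omega
  · intro j hj; simp only [Finset.mem_Ico] at hj; omega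
  · intro j hj
    simp only [Finset.mem_Ico] at hj
    have h : n - (n - j) = j := by omega
    rw [h]


/-- The key convolution identity. -/
lemma core2 (n : ℕ) (hn : 1 ≤ n) :
    12 * ∑ j ∈ Finset.Ico 1 n, (Sg j * Sg (n - j) *
      ((j : ℚ)^2 + ((n - j : ℕ) : ℚ)^2 - 3 * (j : ℚ) * ((n - j : ℕ) : ℚ)))
    = (n : ℚ)^2 * (1 - (n : ℚ)) * Sg n := by
  rw [← core n hn, ← conv_eq n, Finset.mul_sum, Finset.sum_sigma]
  refine Finset.sum_congr rfl ?_
  intro j hj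
  dsimp only
  rw [Finset.sum_product]
  set W : ℚ := (j : ℚ)^2 + ((n - j : ℕ) : ℚ)^2 - 3 * (j : ℚ) * ((n - j : ℕ) : ℚ) with hW
  have h1 : ∀ u : ℕ, ∑ v ∈ (n - j).divisors, 12 * (u : ℚ) * (v : ℚ) * W
      = 12 * (u : ℚ) * Sg (n - j) * W := by
    intro u
    calc ∑ v ∈ (n - j).divisors, 12 * (u : ℚ) * (v : ℚ) * W
        = ∑ v ∈ (n - j).divisors, (v : ℚ) * (12 * (u : ℚ) * W) :=
          Finset.sum_congr rfl (fun v _ => by ring)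
      _ = (∑ v ∈ (n - j).divisors, (v : ℚ)) * (12 * (u : ℚ) * W) := by
          rw [Finset.sum_mul]
      _ = 12 * (u : ℚ) * Sg (n - j) * W := by rw [Sg]; ring
  calc 12 * (Sg j * Sg (n - j) * W)
      = ∑ u ∈ j.divisors, (u : ℚ) * (12 * Sg (n - j) * W) := by
        rw [← Finset.sum_mul, ← Sg]; ring
    _ = ∑ u ∈ j.divisors, ∑ v ∈ (n - j).divisors, 12 * (u : ℚ) * (v : ℚ) * W := by
        refine Finset.sum_congr rfl ?_
        intro u _
        rw [h1 u]
        ring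


lemma coeff_Dq (f : PowerSeries ℚ) (n : ℕ) :
    (PowerSeries.coeff n) (Dq f) = (n : ℚ) * (PowerSeries.coeff n) f := by
  cases n with
  | zero =>
    simp [Dq, PowerSeries.coeff_zero_eq_constantCoeff, map_mul]
  | succ m =>
    rw [Dq, PowerSeries.coeff_succ_X_mul,
      show f.derivativeFun = PowerSeries.derivative ℚ f from rfl, PowerSeries.coeff_derivativeFun]
    push_cast
    ring

end ChazyAux

theorem eisenstein_chazy :
    let P : PowerSeries ℚ := PowerSeries.mk fun n =>
      if n = 0 then 1 else -24 * (∑ d ∈ n.divisors, (d : ℚ))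
    Dq (Dq (Dq P)) = P * Dq (Dq P) - ((3/2 : ℚ) • (Dq P)^2) := by
  intro P
  have hP : ∀ k : ℕ, (PowerSeries.coeff k) P
      = if k = 0 then 1 else -24 * ChazyAux.Sg k := by
    intro k
    rw [show P = PowerSeries.mk (fun n =>
      if n = 0 then 1 else -24 * (∑ d ∈ n.divisors, (d : ℚ))) from rfl, PowerSeries.coeff_mk]
    rfl
  ext n
  rw [map_sub, map_smul, smul_eq_mul, sq, ChazyAux.coeff_Dq, ChazyAux.coeff_Dq,
    ChazyAux.coeff_Dq, PowerSeries.coeff_mul, PowerSeries.coeff_mul]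
  rw [Finset.Nat.sum_antidiagonal_eq_sum_range_succ_mk,
    Finset.Nat.sum_antidiagonal_eq_sum_range_succ_mk]
  simp only [ChazyAux.coeff_Dq]
  rcases Nat.eq_zero_or_pos n with rfl | hn
  · simp
  · rw [Finset.sum_range_succ, Finset.sum_range_succ, Finset.range_eq_Ico,
      Finset.sum_eq_sum_Ico_succ_bot hn, Finset.sum_eq_sum_Ico_succ_bot hn]
    simp only [Nat.sub_zero, Nat.sub_self, Nat.cast_zero, zero_add, zero_mul, mul_zero, add_zero]
    have hPn := hP n
    rw [if_neg (by omega)] at hPn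
    have hP0 := hP 0
    rw [if_pos rfl] at hP0
    set C1 : ℚ := ∑ j ∈ Finset.Ico 1 n,
      ChazyAux.Sg j * ChazyAux.Sg (n - j) * ((n - j : ℕ) : ℚ)^2 with hC1
    set C2 : ℚ := ∑ j ∈ Finset.Ico 1 n,
      ChazyAux.Sg j * ChazyAux.Sg (n - j) * ((j : ℕ) : ℚ)^2 with hC2
    set C3 : ℚ := ∑ j ∈ Finset.Ico 1 n,
      ChazyAux.Sg j * ChazyAux.Sg (n - j) * ((j : ℚ) * ((n - j : ℕ) : ℚ)) with hC3
    have m1 : ∑ k ∈ Finset.Ico 1 n, (PowerSeries.coeff k) P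
          * (((n - k : ℕ) : ℚ) * (((n - k : ℕ) : ℚ) * (PowerSeries.coeff (n - k)) P))
        = 576 * C1 := by
      rw [hC1, Finset.mul_sum]
      refine Finset.sum_congr rfl ?_
      intro j hj
      rw [Finset.mem_Ico] at hj
      rw [hP j, hP (n - j), if_neg (by omega), if_neg (by omega)]
      ring
    have m2 : ∑ k ∈ Finset.Ico 1 n, (k : ℚ) * (PowerSeries.coeff k) P
          * (((n - k : ℕ) : ℚ) * (PowerSeries.coeff (n - k)) P)
        = 576 * C3 := by
      rw [hC3, Finset.mul_sum]
      refine Finset.sum_congr rfl ?_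
      intro j hj
      rw [Finset.mem_Ico] at hj
      rw [hP j, hP (n - j), if_neg (by omega), if_neg (by omega)]
      ring
    have F1 : C1 = C2 := by
      have hr := ChazyAux.reflect n (fun u v => ChazyAux.Sg u * ChazyAux.Sg v * (v : ℚ)^2)
      rw [hC1, hC2]
      rw [hr]
      refine Finset.sum_congr rfl ?_
      intro j hj
      rw [Finset.mem_Ico] at hj
      have h : n - (n - j) = j := by omega
      ring
    have F2 := ChazyAux.core2 n hn
    have split : ∑ j ∈ Finset.Ico 1 n, (ChazyAux.Sg j * ChazyAux.Sg (n - j) *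
          ((j : ℚ)^2 + ((n - j : ℕ) : ℚ)^2 - 3 * (j : ℚ) * ((n - j : ℕ) : ℚ)))
        = C2 + C1 - 3 * C3 := by
      rw [hC1, hC2, hC3]
      have e : ∀ j ∈ Finset.Ico 1 n,
          ChazyAux.Sg j * ChazyAux.Sg (n - j) *
            ((j : ℚ)^2 + ((n - j : ℕ) : ℚ)^2 - 3 * (j : ℚ) * ((n - j : ℕ) : ℚ))
          = (ChazyAux.Sg j * ChazyAux.Sg (n - j) * ((j : ℕ) : ℚ)^2
              + ChazyAux.Sg j * ChazyAux.Sg (n - j) * ((n - j : ℕ) : ℚ)^2)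
            - 3 * (ChazyAux.Sg j * ChazyAux.Sg (n - j) * ((j : ℚ) * ((n - j : ℕ) : ℚ))) :=
        fun j _ => by ring
      rw [Finset.sum_congr rfl e, Finset.sum_sub_distrib, Finset.sum_add_distrib,
        ← Finset.mul_sum]
    rw [split] at F2
    rw [m1, m2, hPn, hP0]
    linear_combination (-24) * F2 + (-288) * F1
end

section
/- Let γ: ℝ → ℝ be three times differentiable and satisfy the Chazy equation γ''' = 6γγ'' − 9(γ')². Define F(v1,v2,v3) = (1/2)v1²v3 + (1/2)v1·v2² − (v2⁴/16)·γ(v3) on ℝ³, and let η = [[0,0,1],[0,1,0],[1,0,0]]. Then F satisfies the WDVV associativity equations: for all α,β,γ,δ ∈ {1,2,3}, ∑_{ρ,σ} F_{αβρ} η^{ρσ} F_{σγδ} = ∑_{ρ,σ} F_{δβρ} η^{ρσ} F_{σγα}. -/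
lemma pd_eq {f : (Fin 3 → ℝ) → ℝ} {x : Fin 3 → ℝ} (i : Fin 3) {g : ℝ → ℝ} {d : ℝ}
    (hfg : ∀ t, f (Function.update x i t) = g t) (hg : HasDerivAt g d (x i)) :
    pd i f x = d := by
  unfold pd
  rw [funext hfg]
  exact hg.deriv

theorem chazy_implies_wdvv (γ : ℝ → ℝ)
    (hd1 : Differentiable ℝ γ)
    (hd2 : Differentiable ℝ (deriv γ))
    (hd3 : Differentiable ℝ (deriv (deriv γ)))
    (hChazy : ∀ x : ℝ, deriv (deriv (deriv γ)) x
      = 6 * γ x * deriv (deriv γ) x - 9 * (deriv γ x)^2) :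
    let F : (Fin 3 → ℝ) → ℝ := fun v =>
      (1/2) * (v 0)^2 * (v 2) + (1/2) * (v 0) * (v 1)^2 - ((v 1)^4 / 16) * γ (v 2)
    let η : Fin 3 → Fin 3 → ℝ := ![![0,0,1], ![0,1,0], ![1,0,0]]
    ∀ (x : Fin 3 → ℝ) (α β γ' δ : Fin 3),
      ∑ ρ : Fin 3, ∑ σ : Fin 3,
          pd α (pd β (pd ρ F)) x * η ρ σ * pd σ (pd γ' (pd δ F)) x
        = ∑ ρ : Fin 3, ∑ σ : Fin 3,
          pd δ (pd β (pd ρ F)) x * η ρ σ * pd σ (pd γ' (pd α F)) x := by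
  intro F η x α β γ' δ
  have hη : η = ![![0,0,1], ![0,1,0], ![1,0,0]] := rfl
  have hF : F = fun v =>
      (1/2) * (v 0)^2 * (v 2) + (1/2) * (v 0) * (v 1)^2 - ((v 1)^4 / 16) * γ (v 2) := rfl
  -- level 1
  have e0 : pd 0 F = fun y => y 0 * y 2 + (1/2)*(y 1)^2 := by
    funext y
    have h : HasDerivAt (fun t : ℝ => (1/2)*t^2*(y 2) + (1/2)*t*(y 1)^2 - ((y 1)^4/16)*γ (y 2))
        ((1/2)*(2*(y 0)^1)*(y 2) + ((1/2)*1)*(y 1)^2) (y 0) :=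
      ((((hasDerivAt_pow 2 (y 0)).const_mul (1/2)).mul_const (y 2)).add
        (((hasDerivAt_id (y 0)).const_mul (1/2)).mul_const ((y 1)^2))).sub_const _
    rw [pd_eq 0 (fun t => by simp [hF, Function.update]) h]; ring
  have e1 : pd 1 F = fun y => y 0 * y 1 - (y 1)^3/4*γ (y 2) := by
    funext y
    have h : HasDerivAt (fun t : ℝ => (1/2)*(y 0)^2*(y 2) + (1/2)*(y 0)*t^2 - (t^4/16)*γ (y 2))
        ((1/2)*(y 0)*(2*(y 1)^1) - ((4*(y 1)^3)/16)*γ (y 2)) (y 1) :=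
      (((hasDerivAt_pow 2 (y 1)).const_mul ((1/2)*(y 0))).const_add _).sub
        (((hasDerivAt_pow 4 (y 1)).div_const 16).mul_const (γ (y 2)))
    rw [pd_eq 1 (fun t => by simp [hF, Function.update]) h]; ring
  have e2 : pd 2 F = fun y => (1/2)*(y 0)^2 - (y 1)^4/16*deriv γ (y 2) := by
    funext y
    have h : HasDerivAt (fun t : ℝ => (1/2)*(y 0)^2*t + (1/2)*(y 0)*(y 1)^2 - ((y 1)^4/16)*γ t)
        ((1/2)*(y 0)^2*1 - ((y 1)^4/16)*deriv γ (y 2)) (y 2) :=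
      (((hasDerivAt_id (y 2)).const_mul ((1/2)*(y 0)^2)).add_const _).sub
        ((hd1.differentiableAt.hasDerivAt).const_mul ((y 1)^4/16))
    rw [pd_eq 2 (fun t => by simp [hF, Function.update]) h]; ring
  -- level 2
  have f00 : pd 0 (pd 0 F) = fun y => y 2 := by
    rw [e0]; funext y
    have h : HasDerivAt (fun t : ℝ => t * y 2 + (1/2)*(y 1)^2) (1 * y 2) (y 0) :=
      ((hasDerivAt_id (y 0)).mul_const (y 2)).add_const _
    rw [pd_eq 0 (fun t => by simp [Function.update]) h]; ring
  have f10 : pd 1 (pd 0 F) = fun y => y 1 := by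
    rw [e0]; funext y
    have h : HasDerivAt (fun t : ℝ => y 0 * y 2 + (1/2)*t^2) ((1/2)*(2*(y 1)^1)) (y 1) :=
      ((hasDerivAt_pow 2 (y 1)).const_mul (1/2)).const_add _
    rw [pd_eq 1 (fun t => by simp [Function.update]) h]; ring
  have f20 : pd 2 (pd 0 F) = fun y => y 0 := by
    rw [e0]; funext y
    have h : HasDerivAt (fun t : ℝ => y 0 * t + (1/2)*(y 1)^2) (y 0 * 1) (y 2) :=
      ((hasDerivAt_id (y 2)).const_mul (y 0)).add_const _
    rw [pd_eq 2 (fun t => by simp [Function.update]) h]; ring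
  have f01 : pd 0 (pd 1 F) = fun y => y 1 := by
    rw [e1]; funext y
    have h : HasDerivAt (fun t : ℝ => t * y 1 - (y 1)^3/4*γ (y 2)) (1 * y 1) (y 0) :=
      ((hasDerivAt_id (y 0)).mul_const (y 1)).sub_const _
    rw [pd_eq 0 (fun t => by simp [Function.update]) h]; ring
  have f11 : pd 1 (pd 1 F) = fun y => y 0 - (3/4)*(y 1)^2*γ (y 2) := by
    rw [e1]; funext y
    have h : HasDerivAt (fun t : ℝ => y 0 * t - t^3/4*γ (y 2))
        (y 0 * 1 - ((3*(y 1)^2)/4)*γ (y 2)) (y 1) :=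
      ((hasDerivAt_id (y 1)).const_mul (y 0)).sub
        (((hasDerivAt_pow 3 (y 1)).div_const 4).mul_const (γ (y 2)))
    rw [pd_eq 1 (fun t => by simp [Function.update]) h]; ring
  have f21 : pd 2 (pd 1 F) = fun y => -((y 1)^3/4*deriv γ (y 2)) := by
    rw [e1]; funext y
    have h : HasDerivAt (fun t : ℝ => y 0 * y 1 - (y 1)^3/4*γ t)
        (-((y 1)^3/4*deriv γ (y 2))) (y 2) := by
      have := ((hd1.differentiableAt.hasDerivAt (x := y 2)).const_mul ((y 1)^3/4)).const_sub (y 0 * y 1)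
      simpa using this
    rw [pd_eq 2 (fun t => by simp [Function.update]) h]
  have f02 : pd 0 (pd 2 F) = fun y => y 0 := by
    rw [e2]; funext y
    have h : HasDerivAt (fun t : ℝ => (1/2)*t^2 - (y 1)^4/16*deriv γ (y 2))
        ((1/2)*(2*(y 0)^1)) (y 0) :=
      ((hasDerivAt_pow 2 (y 0)).const_mul (1/2)).sub_const _
    rw [pd_eq 0 (fun t => by simp [Function.update]) h]; ring
  have f12 : pd 1 (pd 2 F) = fun y => -((y 1)^3/4*deriv γ (y 2)) := by
    rw [e2]; funext y
    have h : HasDerivAt (fun t : ℝ => (1/2)*(y 0)^2 - t^4/16*deriv γ (y 2))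
        (-(((4*(y 1)^3)/16)*deriv γ (y 2))) (y 1) := by
      have := (((hasDerivAt_pow 4 (y 1)).div_const 16).mul_const (deriv γ (y 2))).const_sub ((1/2)*(y 0)^2)
      simpa using this
    rw [pd_eq 1 (fun t => by simp [Function.update]) h]; ring
  have f22 : pd 2 (pd 2 F) = fun y => -((y 1)^4/16*deriv (deriv γ) (y 2)) := by
    rw [e2]; funext y
    have h : HasDerivAt (fun t : ℝ => (1/2)*(y 0)^2 - (y 1)^4/16*deriv γ t)
        (-((y 1)^4/16*deriv (deriv γ) (y 2))) (y 2) := by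
      have := ((hd2.differentiableAt.hasDerivAt (x := y 2)).const_mul ((y 1)^4/16)).const_sub ((1/2)*(y 0)^2)
      simpa using this
    rw [pd_eq 2 (fun t => by simp [Function.update]) h]
  -- level 3 : the 27 third derivatives at x
  have kid : ∀ i : Fin 3, pd i (fun y : Fin 3 → ℝ => y i) x = 1 := fun i =>
    pd_eq i (fun t => by simp) (hasDerivAt_id _)
  have kconst : ∀ (i j : Fin 3), j ≠ i → pd i (fun y : Fin 3 → ℝ => y j) x = 0 := by
    intro i j h
    exact pd_eq i (g := fun _ => x j) (fun t => by simp [Function.update_of_ne h])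
      (hasDerivAt_const _ _)
  have k000 : pd 0 (pd 0 (pd 0 F)) x = 0 := by rw [f00]; exact kconst 0 2 (by decide)
  have k100 : pd 1 (pd 0 (pd 0 F)) x = 0 := by rw [f00]; exact kconst 1 2 (by decide)
  have k200 : pd 2 (pd 0 (pd 0 F)) x = 1 := by rw [f00]; exact kid 2
  have k010 : pd 0 (pd 1 (pd 0 F)) x = 0 := by rw [f10]; exact kconst 0 1 (by decide)
  have k110 : pd 1 (pd 1 (pd 0 F)) x = 1 := by rw [f10]; exact kid 1
  have k210 : pd 2 (pd 1 (pd 0 F)) x = 0 := by rw [f10]; exact kconst 2 1 (by decide)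
  have k020 : pd 0 (pd 2 (pd 0 F)) x = 1 := by rw [f20]; exact kid 0
  have k120 : pd 1 (pd 2 (pd 0 F)) x = 0 := by rw [f20]; exact kconst 1 0 (by decide)
  have k220 : pd 2 (pd 2 (pd 0 F)) x = 0 := by rw [f20]; exact kconst 2 0 (by decide)
  have k001 : pd 0 (pd 0 (pd 1 F)) x = 0 := by rw [f01]; exact kconst 0 1 (by decide)
  have k101 : pd 1 (pd 0 (pd 1 F)) x = 1 := by rw [f01]; exact kid 1
  have k201 : pd 2 (pd 0 (pd 1 F)) x = 0 := by rw [f01]; exact kconst 2 1 (by decide)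
  have k011 : pd 0 (pd 1 (pd 1 F)) x = 1 := by
    rw [f11]
    have h : HasDerivAt (fun t : ℝ => t - (3/4)*(x 1)^2*γ (x 2)) 1 (x 0) :=
      (hasDerivAt_id (x 0)).sub_const _
    exact pd_eq 0 (fun t => by simp [Function.update]) h
  have k111 : pd 1 (pd 1 (pd 1 F)) x = -((3/2)*(x 1)*γ (x 2)) := by
    rw [f11]
    have h : HasDerivAt (fun t : ℝ => x 0 - (3/4)*t^2*γ (x 2))
        (-((3/4)*(2*(x 1)^1)*γ (x 2))) (x 1) := by
      have := ((((hasDerivAt_pow 2 (x 1)).const_mul (3/4))).mul_const (γ (x 2))).const_sub (x 0)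
      simpa using this
    rw [pd_eq 1 (fun t => by simp [Function.update]) h]; ring
  have k211 : pd 2 (pd 1 (pd 1 F)) x = -((3/4)*(x 1)^2*deriv γ (x 2)) := by
    rw [f11]
    have h : HasDerivAt (fun t : ℝ => x 0 - (3/4)*(x 1)^2*γ t)
        (-((3/4)*(x 1)^2*deriv γ (x 2))) (x 2) := by
      have := ((hd1.differentiableAt.hasDerivAt (x := x 2)).const_mul ((3/4)*(x 1)^2)).const_sub (x 0)
      simpa using this
    exact pd_eq 2 (fun t => by simp [Function.update]) h
  have k021 : pd 0 (pd 2 (pd 1 F)) x = 0 := by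
    rw [f21]
    exact pd_eq 0 (fun t => by simp [Function.update])
      (hasDerivAt_const (x 0) (-(x 1 ^ 3/4*deriv γ (x 2))))
  have k121 : pd 1 (pd 2 (pd 1 F)) x = -((3/4)*(x 1)^2*deriv γ (x 2)) := by
    rw [f21]
    have h : HasDerivAt (fun t : ℝ => -(t^3/4*deriv γ (x 2)))
        (-(((3*(x 1)^2)/4)*deriv γ (x 2))) (x 1) :=
      (((hasDerivAt_pow 3 (x 1)).div_const 4).mul_const (deriv γ (x 2))).neg
    rw [pd_eq 1 (fun t => by simp [Function.update]) h]; ring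
  have k221 : pd 2 (pd 2 (pd 1 F)) x = -((x 1)^3/4*deriv (deriv γ) (x 2)) := by
    rw [f21]
    have h : HasDerivAt (fun t : ℝ => -((x 1)^3/4*deriv γ t))
        (-((x 1)^3/4*deriv (deriv γ) (x 2))) (x 2) :=
      ((hd2.differentiableAt.hasDerivAt (x := x 2)).const_mul ((x 1)^3/4)).neg
    exact pd_eq 2 (fun t => by simp [Function.update]) h
  have k002 : pd 0 (pd 0 (pd 2 F)) x = 1 := by rw [f02]; exact kid 0
  have k102 : pd 1 (pd 0 (pd 2 F)) x = 0 := by rw [f02]; exact kconst 1 0 (by decide)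
  have k202 : pd 2 (pd 0 (pd 2 F)) x = 0 := by rw [f02]; exact kconst 2 0 (by decide)
  have k012 : pd 0 (pd 1 (pd 2 F)) x = 0 := by
    rw [f12]
    exact pd_eq 0 (fun t => by simp [Function.update])
      (hasDerivAt_const (x 0) (-(x 1 ^ 3/4*deriv γ (x 2))))
  have k112 : pd 1 (pd 1 (pd 2 F)) x = -((3/4)*(x 1)^2*deriv γ (x 2)) := by
    rw [f12]
    have h : HasDerivAt (fun t : ℝ => -(t^3/4*deriv γ (x 2)))
        (-(((3*(x 1)^2)/4)*deriv γ (x 2))) (x 1) :=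
      (((hasDerivAt_pow 3 (x 1)).div_const 4).mul_const (deriv γ (x 2))).neg
    rw [pd_eq 1 (fun t => by simp [Function.update]) h]; ring
  have k212 : pd 2 (pd 1 (pd 2 F)) x = -((x 1)^3/4*deriv (deriv γ) (x 2)) := by
    rw [f12]
    have h : HasDerivAt (fun t : ℝ => -((x 1)^3/4*deriv γ t))
        (-((x 1)^3/4*deriv (deriv γ) (x 2))) (x 2) :=
      ((hd2.differentiableAt.hasDerivAt (x := x 2)).const_mul ((x 1)^3/4)).neg
    exact pd_eq 2 (fun t => by simp [Function.update]) h
  have k022 : pd 0 (pd 2 (pd 2 F)) x = 0 := by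
    rw [f22]
    exact pd_eq 0 (fun t => by simp [Function.update])
      (hasDerivAt_const (x 0) (-(x 1 ^ 4/16*deriv (deriv γ) (x 2))))
  have k122 : pd 1 (pd 2 (pd 2 F)) x = -((x 1)^3/4*deriv (deriv γ) (x 2)) := by
    rw [f22]
    have h : HasDerivAt (fun t : ℝ => -(t^4/16*deriv (deriv γ) (x 2)))
        (-(((4*(x 1)^3)/16)*deriv (deriv γ) (x 2))) (x 1) :=
      (((hasDerivAt_pow 4 (x 1)).div_const 16).mul_const (deriv (deriv γ) (x 2))).neg
    rw [pd_eq 1 (fun t => by simp [Function.update]) h]; ring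
  have k222 : pd 2 (pd 2 (pd 2 F)) x = -((x 1)^4/16*deriv (deriv (deriv γ)) (x 2)) := by
    rw [f22]
    have h : HasDerivAt (fun t : ℝ => -((x 1)^4/16*deriv (deriv γ) t))
        (-((x 1)^4/16*deriv (deriv (deriv γ)) (x 2))) (x 2) :=
      ((hd3.differentiableAt.hasDerivAt (x := x 2)).const_mul ((x 1)^4/16)).neg
    exact pd_eq 2 (fun t => by simp [Function.update]) h
  clear hF e0 e1 e2 f00 f10 f20 f01 f11 f21 f02 f12 f22 kid kconst
  simp only [Fin.sum_univ_three, hη]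
  fin_cases α <;> fin_cases β <;> fin_cases γ' <;> fin_cases δ <;>
    simp only [Fin.zero_eta, Fin.mk_one, Fin.reduceFinMk, k000, k100, k200, k010, k110, k210, k020, k120, k220,
      k001, k101, k201, k011, k111, k211, k021, k121, k221,
      k002, k102, k202, k012, k112, k212, k022, k122, k222,
      Matrix.cons_val_zero, Matrix.cons_val_one, Matrix.head_cons,
      Matrix.cons_val_two, Matrix.tail_cons, hChazy] <;>
    ring
end
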